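/- For every n ≥ 0, the number of packed words of length n equals the number of packed forests of weight n, i.e. |PW_n| = #𝔉_n. -/

import Mathlib

/-- The maximum letter of a word (a list of natural numbers), with `wmax [] = 0`. -/
def wmax (w : List ℕ) : ℕ := w.foldr max 0

/-- A word over the positive integers is packed if every letter from `1` to its maximum
occurs in it. -/
def IsPacked (w : List ℕ) : Prop :=
  (∀ x ∈ w, 0 < x) ∧ ∀ i : ℕ, 0 < i → i ≤ wmax w → i ∈ w

/-- A labeled biplane tree: every node carries a label (a list of positive integers)
and an ordered pair of (possibly empty) ordered forests of children. -/
inductive LTree : Type where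
  | node : List ℕ → List LTree → List LTree → LTree

instance : Inhabited LTree := ⟨.node [] [] []⟩

mutual
  /-- The weight of a labeled biplane tree: the sum over all nodes of the lengths of
  their labels. -/
  def LTree.weight : LTree → ℕ
    | .node I fl fr => I.length + forestWeight fl + forestWeight fr
  /-- The weight of a forest: the sum of the weights of its trees. -/
  def forestWeight : List LTree → ℕ
    | [] => 0
    | t :: ts => t.weight + forestWeight ts
end

/-- The right-weight `ω_r(t) = p + ω(r_1) + ⋯ + ω(r_d)`. -/
def rightWeight : LTree → ℕ
  | .node I _ fr => I.length + forestWeight fr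

/-- The left forest of a labeled biplane tree. -/
def leftForest : LTree → List LTree
  | .node _ fl _ => fl

/-- Packed trees: the label `I = (i_1 < ⋯ < i_p)` is a nonempty strictly increasing list
of positive integers; if the right forest is empty then `I = (1, …, p)`; otherwise
`1 ≤ i_1 ≤ ω(r_1)` and `1 ≤ ω_r(t) + 1 − i_p ≤ ω(r_d)`; and all subtrees are packed. -/
inductive IsPT : LTree → Prop where
  | mk (I : List ℕ) (fl fr : List LTree) :
      I ≠ [] → I.Pairwise (· < ·) → (∀ i ∈ I, 0 < i) →
      (fr = [] → I = List.range' 1 I.length) →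
      (fr ≠ [] →
        (1 ≤ I.headI ∧ I.headI ≤ fr.headI.weight ∧
         1 ≤ rightWeight (.node I fl fr) + 1 - I.getLastI ∧
         rightWeight (.node I fl fr) + 1 - I.getLastI ≤ fr.getLastI.weight)) →
      (∀ t ∈ fl, IsPT t) → (∀ t ∈ fr, IsPT t) →
      IsPT (.node I fl fr)

-- Section 1: basic word lemmas
theorem wmax_nil : wmax [] = 0 := rfl
theorem wmax_cons (a : ℕ) (w : List ℕ) : wmax (a :: w) = max a (wmax w) := rfl

theorem wmax_append (u v : List ℕ) : wmax (u ++ v) = max (wmax u) (wmax v) := by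
  induction u with
  | nil => simp [wmax_nil, wmax_cons]
  | cons a u ih => simp [wmax_cons, ih, max_assoc]

theorem le_wmax_of_mem {a : ℕ} {w : List ℕ} (h : a ∈ w) : a ≤ wmax w := by
  induction w with
  | nil => simp at h
  | cons b w ih =>
    rcases List.mem_cons.1 h with rfl | h
    · exact le_max_left _ _
    · exact le_trans (ih h) (le_max_right _ _)

theorem wmax_mem {w : List ℕ} (h : w ≠ []) : wmax w ∈ w := by
  induction w with
  | nil => simp at h
  | cons b w ih =>
    rcases eq_or_ne w [] with rfl | hw
    · simp [wmax_cons, wmax_nil]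
    · rw [wmax_cons]
      rcases max_cases b (wmax w) with ⟨h1, _⟩ | ⟨h1, _⟩
      · rw [h1]; exact List.mem_cons_self
      · rw [h1]; exact List.mem_cons_of_mem _ (ih hw)

theorem wmax_le_iff {w : List ℕ} {m : ℕ} : wmax w ≤ m ↔ ∀ a ∈ w, a ≤ m := by
  constructor
  · intro h a ha; exact le_trans (le_wmax_of_mem ha) h
  · intro h
    induction w with
    | nil => simp [wmax_nil]
    | cons b w ih =>
      rw [wmax_cons, max_le_iff]
      exact ⟨h b (List.mem_cons_self), ih fun a ha => h a (List.mem_cons_of_mem _ ha)⟩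

def shift (c : ℕ) (w : List ℕ) : List ℕ := w.map (· + c)

@[simp] theorem shift_nil (c : ℕ) : shift c [] = [] := rfl
@[simp] theorem shift_cons (c a : ℕ) (w : List ℕ) : shift c (a :: w) = (a + c) :: shift c w := rfl
@[simp] theorem length_shift (c : ℕ) (w : List ℕ) : (shift c w).length = w.length := by
  simp [shift]
theorem mem_shift {c a : ℕ} {w : List ℕ} : a ∈ shift c w ↔ ∃ b ∈ w, b + c = a := by
  simp [shift]
@[simp] theorem shift_zero (w : List ℕ) : shift 0 w = w := by simp [shift]

theorem wmax_shift {c : ℕ} {w : List ℕ} (h : w ≠ []) : wmax (shift c w) = wmax w + c := by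
  induction w with
  | nil => simp at h
  | cons a w ih =>
    rcases eq_or_ne w [] with rfl | hw
    · simp [wmax_cons, wmax_nil]
    · rw [shift_cons, wmax_cons, wmax_cons, ih hw, Nat.add_max_add_right]

theorem unshift_shift {c : ℕ} (w : List ℕ) : (shift c w).map (· - c) = w := by
  have : ((· - c) ∘ (· + c)) = (id : ℕ → ℕ) := by
    funext x; simp
  simp [shift, List.map_map, this]

theorem shift_unshift {c : ℕ} {w : List ℕ} (h : ∀ a ∈ w, c ≤ a) : shift c (w.map (· - c)) = w := by
  induction w with
  | nil => rfl
  | cons a w ih =>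
    simp only [List.map_cons, shift_cons]
    rw [Nat.sub_add_cancel (h a (List.mem_cons_self)), ih fun b hb => h b (List.mem_cons_of_mem _ hb)]

theorem shift_injective (c : ℕ) : Function.Injective (shift c) := by
  intro u v h
  have := congrArg (List.map (· - c)) h
  rwa [unshift_shift, unshift_shift] at this

theorem IsPacked_nil : IsPacked [] := ⟨by simp, by simp [wmax_nil]; omega⟩

theorem wmax_pos_of_packed {w : List ℕ} (hp : IsPacked w) (h : w ≠ []) : 0 < wmax w :=
  hp.1 _ (wmax_mem h)

theorem mem_drop_shift {c r b : ℕ} {u : List ℕ} (h : b ∈ u.drop r) : b + c ∈ (shift c u).drop r := by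
  unfold shift
  rw [← List.map_drop]
  exact List.mem_map.2 ⟨b, h, rfl⟩

theorem mem_take_shift {c r b : ℕ} {u : List ℕ} (h : b ∈ u.take r) : b + c ∈ (shift c u).take r := by
  unfold shift
  rw [← List.map_take]
  exact List.mem_map.2 ⟨b, h, rfl⟩
-- Section 2: place and posOf
def place (M : ℕ) : ℕ → List ℕ → List ℕ → List ℕ
  | _, [], xs => xs
  | k, i :: I, xs =>
    if i = k then M :: place M (k+1) I xs
    else
      match xs with
      | [] => []
      | a :: xs' => a :: place M (k+1) (i :: I) xs'
  termination_by k I xs => I.length + xs.length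

def posOf (M : ℕ) : ℕ → List ℕ → List ℕ
  | _, [] => []
  | k, a :: s => if a = M then k :: posOf M (k+1) s else posOf M (k+1) s

@[simp] theorem place_nilI (M k : ℕ) (xs : List ℕ) : place M k [] xs = xs := by
  conv_lhs => unfold place

theorem place_cons_eq (M k : ℕ) (I xs : List ℕ) :
    place M k (k :: I) xs = M :: place M (k+1) I xs := by
  conv_lhs => unfold place
  simp

theorem place_cons_ne_nil (M k i : ℕ) (I : List ℕ) (h : i ≠ k) :
    place M k (i :: I) [] = [] := by
  conv_lhs => unfold place
  simp [h]

theorem place_cons_ne (M k i a : ℕ) (I xs : List ℕ) (h : i ≠ k) :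
    place M k (i :: I) (a :: xs) = a :: place M (k+1) (i :: I) xs := by
  conv_lhs => unfold place
  simp [h]

@[simp] theorem posOf_nil (M k : ℕ) : posOf M k [] = [] := rfl
theorem posOf_cons (M k a : ℕ) (s : List ℕ) :
    posOf M k (a :: s) = if a = M then k :: posOf M (k+1) s else posOf M (k+1) s := rfl

theorem posOf_ge {M k i : ℕ} {s : List ℕ} (h : i ∈ posOf M k s) : k ≤ i := by
  induction s generalizing k with
  | nil => simp at h
  | cons a s ih =>
    rw [posOf_cons] at h
    split at h
    · rcases List.mem_cons.1 h with rfl | h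
      · exact le_refl i
      · exact le_trans (Nat.le_succ k) (ih h)
    · exact le_trans (Nat.le_succ k) (ih h)

theorem posOf_lt {M k i : ℕ} {s : List ℕ} (h : i ∈ posOf M k s) : i < k + s.length := by
  induction s generalizing k with
  | nil => simp at h
  | cons a s ih =>
    rw [posOf_cons] at h
    simp only [List.length_cons]
    split at h
    · rcases List.mem_cons.1 h with rfl | h
      · omega
      · have := ih h; omega
    · have := ih h; omega

theorem posOf_sorted (M k : ℕ) (s : List ℕ) : (posOf M k s).Pairwise (· < ·) := by
  induction s generalizing k with
  | nil => simp
  | cons a s ih =>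
    rw [posOf_cons]
    split
    · exact List.pairwise_cons.2 ⟨fun i hi => lt_of_lt_of_le (Nat.lt_succ_self k) (posOf_ge hi), ih (k+1)⟩
    · exact ih (k+1)

theorem posOf_eq_nil_iff {M k : ℕ} {s : List ℕ} : posOf M k s = [] ↔ M ∉ s := by
  induction s generalizing k with
  | nil => simp
  | cons a s ih =>
    rw [posOf_cons]
    by_cases h : a = M
    · subst h; simp
    · simp only [if_neg h, ih, List.mem_cons]
      constructor
      · intro hn hc; rcases hc with hc | hc
        · exact h hc.symm
        · exact hn hc
      · intro hn hc; exact hn (Or.inr hc)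

theorem place_posOf (M k : ℕ) (s : List ℕ) :
    place M k (posOf M k s) (s.filter (· ≠ M)) = s := by
  induction s generalizing k with
  | nil => simp
  | cons a s ih =>
    rw [posOf_cons]
    by_cases h : a = M
    · subst h
      rw [if_pos rfl, List.filter_cons, if_neg (by simp)]
      rw [place_cons_eq]
      exact congrArg _ (ih (k+1))
    · rw [if_neg h, List.filter_cons]
      have hd : (decide ¬(a = M)) = true := by simp [h]
      rw [if_pos hd]
      rcases hI : posOf M (k+1) s with _ | ⟨i, I⟩
      · rw [place_nilI]
        have : M ∉ s := posOf_eq_nil_iff.1 hI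
        have : s.filter (· ≠ M) = s := by
          apply List.filter_eq_self.2
          intro b hb
          simp only [ne_eq, decide_eq_true_eq]
          intro hbm; exact this (hbm ▸ hb)
        rw [this]
      · have hik : i ≠ k := by
          have : k + 1 ≤ i := posOf_ge (hI ▸ (List.mem_cons_self (a := i) (l := I)))
          omega
        rw [place_cons_ne _ _ _ _ _ _ hik]
        have := ih (k := k+1)
        rw [hI] at this
        rw [this]
-- Section 3: place lemmas under validity
theorem exists_big_of_sorted {I : List ℕ} {k : ℕ} (hs : I.Pairwise (· < ·))
    (hge : ∀ i ∈ I, k ≤ i) (hne : I ≠ []) : ∃ j ∈ I, k + I.length ≤ j + 1 := by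
  induction I generalizing k with
  | nil => simp at hne
  | cons i I ih =>
    rcases eq_or_ne I [] with rfl | hne'
    · refine ⟨i, by simp, ?_⟩
      have := hge i (by simp); simp; omega
    · have hs' := (List.pairwise_cons.1 hs).2
      have hgt := (List.pairwise_cons.1 hs).1
      obtain ⟨j, hj, hjb⟩ := ih hs' (k := i + 1) (fun x hx => hgt x hx) hne'
      refine ⟨j, List.mem_cons_of_mem _ hj, ?_⟩
      have := hge i (by simp)
      simp only [List.length_cons] at *
      omega

theorem sorted_cons_tail_ge {i : ℕ} {I : List ℕ} (hs : (i :: I).Pairwise (· < ·)) :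
    ∀ x ∈ I, i + 1 ≤ x := fun x hx => (List.pairwise_cons.1 hs).1 x hx

theorem cons_ne_bounds {k i : ℕ} {I : List ℕ} (hs : (i :: I).Pairwise (· < ·))
    (hge : ∀ x ∈ i :: I, k ≤ x) (hne : i ≠ k) : ∀ x ∈ i :: I, k + 1 ≤ x := by
  intro x hx
  rcases List.mem_cons.1 hx with rfl | hx
  · have := hge x (by simp); omega
  · have h1 := sorted_cons_tail_ge hs x hx
    have := hge i (by simp); omega

/-- pigeonhole contradiction for the junk branch -/
theorem junk_absurd {k i : ℕ} {I : List ℕ} (hs : (i :: I).Pairwise (· < ·))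
    (hge : ∀ x ∈ i :: I, k ≤ x) (hne : i ≠ k)
    (hlt : ∀ x ∈ i :: I, x < k + (i :: I).length) : False := by
  obtain ⟨j, hj, hjb⟩ := exists_big_of_sorted hs (cons_ne_bounds hs hge hne) (by simp)
  have := hlt j hj
  omega

theorem ne_bounds_len {k i m : ℕ} {I : List ℕ} (hs : (i :: I).Pairwise (· < ·))
    (hge : ∀ x ∈ i :: I, k ≤ x) (hne : i ≠ k)
    (hm : ∀ x ∈ i :: I, x < k + m) : (i :: I).length + 1 ≤ m := by
  obtain ⟨j, hj, hjb⟩ := exists_big_of_sorted hs (cons_ne_bounds hs hge hne) (by simp)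
  have := hm j hj
  simp only [List.length_cons] at *
  omega

theorem place_length (M : ℕ) {k : ℕ} {I xs : List ℕ} (hs : I.Pairwise (· < ·))
    (hge : ∀ i ∈ I, k ≤ i) (hlt : ∀ i ∈ I, i < k + I.length + xs.length) :
    (place M k I xs).length = I.length + xs.length := by
  induction k, I, xs using place.induct with
  | case1 k xs => simp
  | case2 i I xs ih =>
    rw [place_cons_eq, List.length_cons]
    have hs' := (List.pairwise_cons.1 hs).2
    have hge' := sorted_cons_tail_ge hs
    have hlt' : ∀ x ∈ I, x < (i + 1) + I.length + xs.length := by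
      intro x hx; have := hlt x (List.mem_cons_of_mem _ hx); simp at this ⊢; omega
    rw [ih hs' hge' hlt']
    simp; omega
  | case3 k i I hne =>
    exact (junk_absurd hs hge hne (by intro x hx; have := hlt x hx; simpa using this)).elim
  | case4 k i I hne a xs' ih =>
    rw [place_cons_ne _ _ _ _ _ _ hne, List.length_cons]
    have hge' := cons_ne_bounds hs hge hne
    have hlt' : ∀ x ∈ i :: I, x < (k + 1) + (i :: I).length + xs'.length := by
      intro x hx; have := hlt x hx; simp at this ⊢; omega
    rw [ih hs hge' hlt']
    simp; omega

theorem place_mem {M k : ℕ} {I xs : List ℕ} : ∀ b ∈ place M k I xs, b = M ∨ b ∈ xs := by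
  induction k, I, xs using place.induct with
  | case1 k xs => intro b hb; right; simpa using hb
  | case2 i I xs ih =>
    intro b hb
    rw [place_cons_eq] at hb
    rcases List.mem_cons.1 hb with rfl | hb
    · left; rfl
    · exact ih b hb
  | case3 k i I hne =>
    intro b hb; rw [place_cons_ne_nil _ _ _ _ hne] at hb; simp at hb
  | case4 k i I hne a xs' ih =>
    intro b hb
    rw [place_cons_ne _ _ _ _ _ _ hne] at hb
    rcases List.mem_cons.1 hb with rfl | hb
    · right; simp
    · rcases ih b hb with h | h
      · left; exact h
      · right; exact List.mem_cons_of_mem _ h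

theorem mem_place_of_mem {M k : ℕ} {I xs : List ℕ} : ∀ b ∈ xs, b ∈ place M k I xs := by
  induction k, I, xs using place.induct with
  | case1 k xs => intro b hb; simpa using hb
  | case2 i I xs ih =>
    intro b hb; rw [place_cons_eq]; exact List.mem_cons_of_mem _ (ih b hb)
  | case3 k i I hne => intro b hb; simp at hb
  | case4 k i I hne a xs' ih =>
    intro b hb
    rw [place_cons_ne _ _ _ _ _ _ hne]
    rcases List.mem_cons.1 hb with rfl | hb
    · simp
    · exact List.mem_cons_of_mem _ (ih b hb)

theorem M_mem_place {M k : ℕ} {I xs : List ℕ} (hs : I.Pairwise (· < ·))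
    (hge : ∀ i ∈ I, k ≤ i) (hlt : ∀ i ∈ I, i < k + I.length + xs.length)
    (hne : I ≠ []) : M ∈ place M k I xs := by
  induction k, I, xs using place.induct with
  | case1 k xs => simp at hne
  | case2 i I xs ih => rw [place_cons_eq]; simp
  | case3 k i I hne' =>
    exact (junk_absurd hs hge hne' (by intro x hx; have := hlt x hx; simpa using this)).elim
  | case4 k i I hne' a xs' ih =>
    rw [place_cons_ne _ _ _ _ _ _ hne']
    refine List.mem_cons_of_mem _ (ih hs (cons_ne_bounds hs hge hne') ?_ hne)
    intro x hx; have := hlt x hx; simp at this ⊢; omega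

theorem posOf_place {M k : ℕ} {I xs : List ℕ} (hs : I.Pairwise (· < ·))
    (hge : ∀ i ∈ I, k ≤ i) (hlt : ∀ i ∈ I, i < k + I.length + xs.length)
    (hM : ∀ a ∈ xs, a ≠ M) : posOf M k (place M k I xs) = I := by
  induction k, I, xs using place.induct with
  | case1 k xs =>
    rw [place_nilI]
    exact posOf_eq_nil_iff.2 (fun hc => hM M hc rfl)
  | case2 i I xs ih =>
    rw [place_cons_eq, posOf_cons, if_pos rfl]
    have hs' := (List.pairwise_cons.1 hs).2
    have hge' := sorted_cons_tail_ge hs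
    have hlt' : ∀ x ∈ I, x < (i + 1) + I.length + xs.length := by
      intro x hx; have := hlt x (List.mem_cons_of_mem _ hx); simp at this ⊢; omega
    rw [ih hs' hge' hlt' hM]
  | case3 k i I hne =>
    exact (junk_absurd hs hge hne (by intro x hx; have := hlt x hx; simpa using this)).elim
  | case4 k i I hne a xs' ih =>
    rw [place_cons_ne _ _ _ _ _ _ hne, posOf_cons, if_neg (hM a (by simp))]
    refine ih hs (cons_ne_bounds hs hge hne) ?_ (fun x hx => hM x (List.mem_cons_of_mem _ hx))
    intro x hx; have := hlt x hx; simp at this ⊢; omega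

theorem filter_place {M k : ℕ} {I xs : List ℕ} (hs : I.Pairwise (· < ·))
    (hge : ∀ i ∈ I, k ≤ i) (hlt : ∀ i ∈ I, i < k + I.length + xs.length)
    (hM : ∀ a ∈ xs, a ≠ M) : (place M k I xs).filter (· ≠ M) = xs := by
  induction k, I, xs using place.induct with
  | case1 k xs =>
    rw [place_nilI]
    refine List.filter_eq_self.2 ?_
    intro b hb; simpa using hM b hb
  | case2 i I xs ih =>
    rw [place_cons_eq, List.filter_cons, if_neg (by simp)]
    have hs' := (List.pairwise_cons.1 hs).2
    have hge' := sorted_cons_tail_ge hs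
    have hlt' : ∀ x ∈ I, x < (i + 1) + I.length + xs.length := by
      intro x hx; have := hlt x (List.mem_cons_of_mem _ hx); simp at this ⊢; omega
    exact ih hs' hge' hlt' hM
  | case3 k i I hne =>
    exact (junk_absurd hs hge hne (by intro x hx; have := hlt x hx; simpa using this)).elim
  | case4 k i I hne a xs' ih =>
    rw [place_cons_ne _ _ _ _ _ _ hne, List.filter_cons, if_pos (by simpa using hM a (by simp))]
    have := ih hs (cons_ne_bounds hs hge hne)
      (by intro x hx; have := hlt x hx; simp at this ⊢; omega)
      (fun x hx => hM x (List.mem_cons_of_mem _ hx))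
    rw [this]
-- Section 4: take/drop lemmas for place
theorem place_drop {M k : ℕ} {I xs : List ℕ} (hs : I.Pairwise (· < ·))
    (hge : ∀ i ∈ I, k ≤ i) :
    ∀ m, (∀ i ∈ I, i < k + m) → (place M k I xs).drop m = xs.drop (m - I.length) := by
  induction k, I, xs using place.induct with
  | case1 k xs => intro m _; simp
  | case2 i I xs ih =>
    intro m hm
    have hm0 : 0 < m := by have := hm i (by simp); omega
    rw [place_cons_eq]
    have hdrop : (M :: place M (i+1) I xs).drop m = (place M (i+1) I xs).drop (m-1) := by
      cases m with
      | zero => omega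
      | succ m => simp
    rw [hdrop]
    have hs' := (List.pairwise_cons.1 hs).2
    have hge' := sorted_cons_tail_ge hs
    rw [ih hs' hge' (m-1) (by intro x hx; have := hm x (List.mem_cons_of_mem _ hx); omega)]
    congr 1
    simp only [List.length_cons]
    omega
  | case3 k i I hne =>
    intro m hm
    rw [place_cons_ne_nil _ _ _ _ hne]
    simp
  | case4 k i I hne a xs' ih =>
    intro m hm
    have hlen : (i :: I).length + 1 ≤ m := ne_bounds_len hs hge hne hm
    have hm0 : 0 < m := by simp at hlen; omega
    rw [place_cons_ne _ _ _ _ _ _ hne]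
    have hdrop : (a :: place M (k+1) (i :: I) xs').drop m = (place M (k+1) (i :: I) xs').drop (m-1) := by
      cases m with
      | zero => omega
      | succ m => simp
    rw [hdrop, ih hs (cons_ne_bounds hs hge hne) (m-1) (by intro x hx; have := hm x hx; omega)]
    have : (a :: xs').drop (m - (i :: I).length) = xs'.drop (m - (i :: I).length - 1) := by
      rcases Nat.exists_eq_add_of_le hlen with ⟨c, hc⟩
      simp only [List.length_cons] at *
      rw [show m - (I.length + 1) = (m - (I.length + 1) - 1) + 1 by omega]
      simp
    rw [this]
    congr 1
    simp only [List.length_cons]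
    omega

theorem place_take_mem {M k : ℕ} {I xs : List ℕ} (hs : I.Pairwise (· < ·))
    (hge : ∀ i ∈ I, k ≤ i) :
    ∀ m, (∀ i ∈ I, i < k + m) → ∀ b ∈ xs.take (m - I.length), b ∈ (place M k I xs).take m := by
  induction k, I, xs using place.induct with
  | case1 k xs => intro m _ b hb; simpa using hb
  | case2 i I xs ih =>
    intro m hm b hb
    have hm0 : 0 < m := by have := hm i (by simp); omega
    rw [place_cons_eq]
    have htake : (M :: place M (i+1) I xs).take m = M :: (place M (i+1) I xs).take (m-1) := by
      cases m with
      | zero => omega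
      | succ m => simp
    rw [htake]
    refine List.mem_cons_of_mem _ ?_
    refine ih (List.pairwise_cons.1 hs).2 (sorted_cons_tail_ge hs) (m-1)
      (by intro x hx; have := hm x (List.mem_cons_of_mem _ hx); omega) b ?_
    have : m - 1 - I.length = m - (i :: I).length := by simp; omega
    rwa [this]
  | case3 k i I hne => intro m hm b hb; simp at hb
  | case4 k i I hne a xs' ih =>
    intro m hm b hb
    have hlen : (i :: I).length + 1 ≤ m := ne_bounds_len hs hge hne hm
    have hm0 : 0 < m := by simp at hlen; omega
    rw [place_cons_ne _ _ _ _ _ _ hne]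
    have htake : (a :: place M (k+1) (i :: I) xs').take m
        = a :: (place M (k+1) (i :: I) xs').take (m-1) := by
      cases m with
      | zero => omega
      | succ m => simp
    rw [htake]
    have hsplit : (a :: xs').take (m - (i :: I).length) = a :: xs'.take (m - (i :: I).length - 1) := by
      rw [show m - (i :: I).length = (m - (i :: I).length - 1) + 1 by simp at hlen ⊢; omega]
      simp
    rw [hsplit] at hb
    rcases List.mem_cons.1 hb with rfl | hb
    · simp
    · refine List.mem_cons_of_mem _ ?_
      refine ih hs (cons_ne_bounds hs hge hne) (m-1)
        (by intro x hx; have := hm x hx; omega) b ?_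
      have : m - 1 - (i :: I).length = m - (i :: I).length - 1 := by omega
      rwa [this]

theorem place_drop_mem {M k : ℕ} {I xs : List ℕ} :
    ∀ m, ∀ b ∈ xs.drop m, b ∈ (place M k I xs).drop m := by
  induction k, I, xs using place.induct with
  | case1 k xs => intro m b hb; simpa using hb
  | case2 i I xs ih =>
    intro m b hb
    rw [place_cons_eq]
    cases m with
    | zero =>
      simp only [List.drop_zero] at hb ⊢
      exact List.mem_cons_of_mem _ (mem_place_of_mem b hb)
    | succ m =>
      simp only [List.drop_succ_cons]
      refine ih m b ?_
      have hsub : xs.drop (m+1) ⊆ xs.drop m := by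
        intro x hx
        refine List.drop_subset 1 (xs.drop m) ?_
        rw [List.drop_drop]
        first
        | exact hx
        | (rw [show 1 + m = m + 1 by omega]; exact hx)
      exact hsub hb
  | case3 k i I hne => intro m b hb; simp at hb
  | case4 k i I hne a xs' ih =>
    intro m b hb
    rw [place_cons_ne _ _ _ _ _ _ hne]
    cases m with
    | zero =>
      simp only [List.drop_zero] at hb ⊢
      rcases List.mem_cons.1 hb with rfl | hb
      · simp
      · exact List.mem_cons_of_mem _ (mem_place_of_mem b hb)
    | succ m =>
      simp only [List.drop_succ_cons] at hb ⊢
      exact ih m b hb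

theorem M_mem_take_place {M k : ℕ} {I xs : List ℕ} (hs : I.Pairwise (· < ·))
    (hge : ∀ i ∈ I, k ≤ i) (hlt : ∀ i ∈ I, i < k + I.length + xs.length) :
    ∀ m i, i ∈ I → i < k + m → M ∈ (place M k I xs).take m := by
  induction k, I, xs using place.induct with
  | case1 k xs => intro m i hi; simp at hi
  | case2 i I xs ih =>
    intro m j hj hjm
    have hm0 : 0 < m := by have := hge j hj; omega
    rw [place_cons_eq]
    have htake : (M :: place M (i+1) I xs).take m = M :: (place M (i+1) I xs).take (m-1) := by
      cases m with
      | zero => omega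
      | succ m => simp
    rw [htake]; simp
  | case3 k i I hne =>
    exact (junk_absurd hs hge hne (by intro x hx; have := hlt x hx; simpa using this)).elim
  | case4 k i I hne a xs' ih =>
    intro m j hj hjm
    have hge' := cons_ne_bounds hs hge hne
    have hm0 : 0 < m := by have := hge' j hj; omega
    rw [place_cons_ne _ _ _ _ _ _ hne]
    have htake : (a :: place M (k+1) (i :: I) xs').take m
        = a :: (place M (k+1) (i :: I) xs').take (m-1) := by
      cases m with
      | zero => omega
      | succ m => simp
    rw [htake]
    refine List.mem_cons_of_mem _ ?_
    refine ih hs hge' (by intro x hx; have := hlt x hx; simp at this ⊢; omega) (m-1) j hj ?_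
    have := hge' j hj
    omega

theorem M_mem_drop_place {M k : ℕ} {I xs : List ℕ} (hs : I.Pairwise (· < ·))
    (hge : ∀ i ∈ I, k ≤ i) (hlt : ∀ i ∈ I, i < k + I.length + xs.length) :
    ∀ m i, i ∈ I → k + m ≤ i → M ∈ (place M k I xs).drop m := by
  induction k, I, xs using place.induct with
  | case1 k xs => intro m i hi; simp at hi
  | case2 i I xs ih =>
    intro m j hj hjm
    rw [place_cons_eq]
    cases m with
    | zero =>
      simp
    | succ m =>
      simp only [List.drop_succ_cons]
      have hjI : j ∈ I := by
        rcases List.mem_cons.1 hj with rfl | h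
        · omega
        · exact h
      refine ih (List.pairwise_cons.1 hs).2 (sorted_cons_tail_ge hs)
        (by intro x hx; have := hlt x (List.mem_cons_of_mem _ hx); simp at this ⊢; omega)
        m j hjI (by omega)
  | case3 k i I hne =>
    exact (junk_absurd hs hge hne (by intro x hx; have := hlt x hx; simpa using this)).elim
  | case4 k i I hne a xs' ih =>
    intro m j hj hjm
    rw [place_cons_ne _ _ _ _ _ _ hne]
    have hlt' : ∀ x ∈ i :: I, x < (k+1) + (i :: I).length + xs'.length := by
      intro x hx; have := hlt x hx; simp at this ⊢; omega
    cases m with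
    | zero =>
      simp only [List.drop_zero]
      exact List.mem_cons_of_mem _ (M_mem_place hs (cons_ne_bounds hs hge hne) hlt' (by simp))
    | succ m =>
      simp only [List.drop_succ_cons]
      exact ih hs (cons_ne_bounds hs hge hne) hlt' m j hj (by omega)

theorem place_take_early {M k : ℕ} {I xs : List ℕ} :
    ∀ g, (∀ i ∈ I, k + g ≤ i) → (place M k I xs).take g = xs.take g := by
  induction k, I, xs using place.induct with
  | case1 k xs => intro g _; simp
  | case2 i I xs ih =>
    intro g hg
    have : g = 0 := by have := hg i (by simp); omega
    subst this; simp
  | case3 k i I hne => intro g hg; rw [place_cons_ne_nil _ _ _ _ hne]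
  | case4 k i I hne a xs' ih =>
    intro g hg
    rw [place_cons_ne _ _ _ _ _ _ hne]
    cases g with
    | zero => simp
    | succ g =>
      simp only [List.take_succ_cons]
      rw [ih g (by intro x hx; have := hg x hx; omega)]

theorem place_drop_early {M k : ℕ} {I xs : List ℕ} (hs : I.Pairwise (· < ·))
    (hge : ∀ i ∈ I, k ≤ i) (hlt : ∀ i ∈ I, i < k + I.length + xs.length) :
    ∀ g, (∀ i ∈ I, k + g ≤ i) → (place M k I xs).drop g = place M (k+g) I (xs.drop g) := by
  induction k, I, xs using place.induct with
  | case1 k xs => intro g _; simp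
  | case2 i I xs ih =>
    intro g hg
    have : g = 0 := by have := hg i (by simp); omega
    subst this; simp
  | case3 k i I hne =>
    exact (junk_absurd hs hge hne (by intro x hx; have := hlt x hx; simpa using this)).elim
  | case4 k i I hne a xs' ih =>
    intro g hg
    rw [place_cons_ne _ _ _ _ _ _ hne]
    cases g with
    | zero => simp [place_cons_ne _ _ _ _ _ _ hne]
    | succ g =>
      simp only [List.drop_succ_cons]
      rw [ih hs (cons_ne_bounds hs hge hne)
        (by intro x hx; have := hlt x hx; simp at this ⊢; omega)
        g (by intro x hx; have := hg x hx; omega)]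
      congr 1
      omega

theorem place_take_filter {M k : ℕ} {I xs : List ℕ} (hs : I.Pairwise (· < ·))
    (hge : ∀ i ∈ I, k ≤ i) :
    ∀ m, (∀ i ∈ I, i < k + m) → (∀ a ∈ xs, a ≠ M) →
      ((place M k I xs).take m).filter (· ≠ M) = xs.take (m - I.length) := by
  induction k, I, xs using place.induct with
  | case1 k xs =>
    intro m _ hM
    simp only [place_nilI, List.length_nil, Nat.sub_zero]
    refine List.filter_eq_self.2 ?_
    intro b hb
    simpa using hM b (List.take_subset _ _ hb)
  | case2 i I xs ih =>
    intro m hm hM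
    have hm0 : 0 < m := by have := hm i (by simp); omega
    rw [place_cons_eq]
    have htake : (M :: place M (i+1) I xs).take m = M :: (place M (i+1) I xs).take (m-1) := by
      cases m with
      | zero => omega
      | succ m => simp
    rw [htake, List.filter_cons, if_neg (by simp)]
    rw [ih (List.pairwise_cons.1 hs).2 (sorted_cons_tail_ge hs) (m-1)
      (by intro x hx; have := hm x (List.mem_cons_of_mem _ hx); omega) hM]
    congr 1
    simp only [List.length_cons]
    omega
  | case3 k i I hne => intro m hm hM; rw [place_cons_ne_nil _ _ _ _ hne]; simp
  | case4 k i I hne a xs' ih =>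
    intro m hm hM
    have hlen : (i :: I).length + 1 ≤ m := ne_bounds_len hs hge hne hm
    have hm0 : 0 < m := by simp at hlen; omega
    rw [place_cons_ne _ _ _ _ _ _ hne]
    have htake : (a :: place M (k+1) (i :: I) xs').take m
        = a :: (place M (k+1) (i :: I) xs').take (m-1) := by
      cases m with
      | zero => omega
      | succ m => simp
    rw [htake, List.filter_cons, if_pos (by simpa using hM a (by simp))]
    rw [ih hs (cons_ne_bounds hs hge hne) (m-1)
      (by intro x hx; have := hm x hx; omega)
      (fun x hx => hM x (List.mem_cons_of_mem _ hx))]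
    have hsplit : (a :: xs').take (m - (i :: I).length) = a :: xs'.take (m - (i :: I).length - 1) := by
      rw [show m - (i :: I).length = (m - (i :: I).length - 1) + 1 by simp at hlen ⊢; omega]
      simp
    rw [hsplit]
    congr 2
    omega

theorem posOf_filter_len (M k : ℕ) (s : List ℕ) :
    (posOf M k s).length + (s.filter (· ≠ M)).length = s.length := by
  induction s generalizing k with
  | nil => simp
  | cons a s ih =>
    rw [posOf_cons, List.filter_cons]
    by_cases h : a = M
    · subst h
      rw [if_pos rfl, if_neg (by simp)]
      simp only [List.length_cons]
      have := ih (k+1)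
      omega
    · rw [if_neg h, if_pos (by simpa using h)]
      simp only [List.length_cons]
      have := ih (k+1)
      omega
-- Section 5: GD, Indec, Theta
def GD (w : List ℕ) (q : ℕ) : Prop :=
  0 < q ∧ q < w.length ∧ ∀ b ∈ w.drop q, ∀ a ∈ w.take q, b < a

def Indec (w : List ℕ) : Prop := ∀ q, ¬ GD w q

mutual
  def ThetaT : LTree → List ℕ
    | .node I fl fr =>
      shift (wmax (ThetaF fr)) (ThetaF fl) ++
        place (wmax (ThetaF fr) + wmax (ThetaF fl) + 1) 1 I (ThetaF fr)
  def ThetaF : List LTree → List ℕ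
    | [] => []
    | t :: ts => shift (wmax (ThetaF ts)) (ThetaT t) ++ ThetaF ts
end

theorem ThetaT_node (I : List ℕ) (fl fr : List LTree) :
    ThetaT (.node I fl fr) =
      shift (wmax (ThetaF fr)) (ThetaF fl) ++
        place (wmax (ThetaF fr) + wmax (ThetaF fl) + 1) 1 I (ThetaF fr) := by
  conv_lhs => unfold ThetaT

@[simp] theorem ThetaF_nil : ThetaF [] = [] := by conv_lhs => unfold ThetaF

theorem ThetaF_cons (t : LTree) (ts : List LTree) :
    ThetaF (t :: ts) = shift (wmax (ThetaF ts)) (ThetaT t) ++ ThetaF ts := by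
  conv_lhs => unfold ThetaF

theorem weight_node (I : List ℕ) (fl fr : List LTree) :
    (LTree.node I fl fr).weight = I.length + forestWeight fl + forestWeight fr := by
  conv_lhs => unfold LTree.weight

@[simp] theorem forestWeight_nil : forestWeight [] = 0 := by conv_lhs => unfold forestWeight
theorem forestWeight_cons (t : LTree) (ts : List LTree) :
    forestWeight (t :: ts) = t.weight + forestWeight ts := by
  conv_lhs => unfold forestWeight

theorem rightWeight_node (I : List ℕ) (fl fr : List LTree) :
    rightWeight (.node I fl fr) = I.length + forestWeight fr := rfl

theorem IsPT_weight_pos {t : LTree} (h : IsPT t) : 0 < t.weight := by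
  cases t with
  | node I fl fr =>
    cases h with
    | mk _ _ _ hne _ _ _ _ _ _ =>
      rw [weight_node]
      have : I.length ≠ 0 := fun hc => hne (List.length_eq_zero_iff.1 hc)
      omega

theorem weight_le_of_mem {t : LTree} {f : List LTree} (h : t ∈ f) : t.weight ≤ forestWeight f := by
  induction f with
  | nil => simp at h
  | cons s f ih =>
    rw [forestWeight_cons]
    rcases List.mem_cons.1 h with rfl | h
    · omega
    · have := ih h; omega

theorem forestWeight_pos {f : List LTree} (hf : ∀ u ∈ f, IsPT u) (hne : f ≠ []) :
    0 < forestWeight f := by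
  cases f with
  | nil => exact absurd rfl hne
  | cons t ts =>
    rw [forestWeight_cons]
    have := IsPT_weight_pos (hf t (by simp))
    omega

theorem sorted_le_getLast {I : List ℕ} (hs : I.Pairwise (· < ·)) (hne : I ≠ []) :
    ∀ x ∈ I, x ≤ I.getLast hne := by
  induction I with
  | nil => simp at hne
  | cons i I ih =>
    intro x hx
    rcases eq_or_ne I [] with rfl | hne'
    · simp at hx; simp [hx]
    · rw [List.getLast_cons hne']
      rcases List.mem_cons.1 hx with rfl | hx
      · have h1 := (List.pairwise_cons.1 hs).1
        have h2 := List.getLast_mem hne'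
        exact le_of_lt (h1 _ h2)
      · exact ih (List.pairwise_cons.1 hs).2 hne' x hx

theorem getLastI_eq_getLast {l : List ℕ} (hne : l ≠ []) : l.getLastI = l.getLast hne := by
  rw [List.getLastI_eq_getLast?, List.getLast?_eq_getLast hne, Option.getD_some]

theorem headI_eq_head {l : List ℕ} (hne : l ≠ []) : l.headI = l.head hne := by
  cases l with
  | nil => exact absurd rfl hne
  | cons a l => rfl

theorem tree_getLastI_eq_getLast {l : List LTree} (hne : l ≠ []) : l.getLastI = l.getLast hne := by
  rw [List.getLastI_eq_getLast?, List.getLast?_eq_getLast hne, Option.getD_some]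

theorem tree_headI_eq_head {l : List LTree} (hne : l ≠ []) : l.headI = l.head hne := by
  cases l with
  | nil => exact absurd rfl hne
  | cons a l => rfl

theorem IsPT_bounds {I : List ℕ} {fl fr : List LTree} (h : IsPT (.node I fl fr)) :
    I ≠ [] ∧ I.Pairwise (· < ·) ∧ (∀ i ∈ I, 1 ≤ i) ∧
      (∀ i ∈ I, i < 1 + I.length + forestWeight fr) := by
  cases h with
  | mk I fl fr hne hs hpos h0 h1 _ _ =>
    refine ⟨hne, hs, hpos, ?_⟩
    intro i hi
    rcases eq_or_ne fr [] with rfl | hfr'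
    · rw [h0 rfl] at hi
      have := List.mem_range'_1.1 hi
      simp only [forestWeight_nil]
      omega
    · obtain ⟨_, _, h3, h4⟩ := h1 hfr'
      have hle : i ≤ I.getLast hne := sorted_le_getLast hs hne i hi
      rw [getLastI_eq_getLast hne, rightWeight_node] at h3
      have hgm := List.getLast_mem hne
      omega

theorem packed_star {u v : List ℕ} (hu : IsPacked u) (hv : IsPacked v) :
    IsPacked (shift (wmax v) u ++ v) := by
  rcases eq_or_ne u [] with rfl | hune
  · simpa using hv
  constructor
  · intro x hx
    rcases List.mem_append.1 hx with hx | hx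
    · obtain ⟨b, hb, rfl⟩ := mem_shift.1 hx
      have := hu.1 b hb
      omega
    · exact hv.1 x hx
  · intro i hi0 hile
    rw [wmax_append, wmax_shift hune,
      max_eq_left (by omega : wmax v ≤ wmax u + wmax v)] at hile
    have hle : i ≤ wmax u + wmax v := hile
    by_cases hic : i ≤ wmax v
    · exact List.mem_append.2 (Or.inr (hv.2 i hi0 hic))
    · push_neg at hic
      have : i - wmax v ∈ u := hu.2 (i - wmax v) (by omega) (by omega)
      refine List.mem_append.2 (Or.inl (mem_shift.2 ⟨i - wmax v, this, by omega⟩))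
-- Section 6: forest structure lemmas
def TF (f : List LTree) : Prop :=
  ∀ t ∈ f, IsPT t ∧ (ThetaT t).length = t.weight ∧ IsPacked (ThetaT t) ∧ Indec (ThetaT t)

theorem TF_tail {t : LTree} {ts : List LTree} (hf : TF (t :: ts)) : TF ts :=
  fun u hu => hf u (List.mem_cons_of_mem _ hu)

theorem forest_len {f : List LTree} (hf : TF f) : (ThetaF f).length = forestWeight f := by
  induction f with
  | nil => simp
  | cons t ts ih =>
    rw [ThetaF_cons, forestWeight_cons, List.length_append, length_shift,
      (hf t (by simp)).2.1, ih (TF_tail hf)]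

theorem forest_packed {f : List LTree} (hf : TF f) : IsPacked (ThetaF f) := by
  induction f with
  | nil => rw [ThetaF_nil]; exact IsPacked_nil
  | cons t ts ih =>
    rw [ThetaF_cons]
    exact packed_star (hf t (by simp)).2.2.1 (ih (TF_tail hf))

theorem thetaT_ne_nil {t : LTree} (h1 : IsPT t) (h2 : (ThetaT t).length = t.weight) :
    ThetaT t ≠ [] := by
  intro hc
  have := IsPT_weight_pos h1
  rw [← h2, hc] at this
  simp at this

theorem forest_GD_head {t : LTree} {ts : List LTree} (hf : TF (t :: ts)) (hne : ts ≠ []) :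
    GD (ThetaF (t :: ts)) t.weight := by
  obtain ⟨hpt, hlen, hpk, _⟩ := hf t (by simp)
  have hlents := forest_len (TF_tail hf)
  have hlenw : (ThetaF (t :: ts)).length = t.weight + forestWeight ts := by
    rw [ThetaF_cons, List.length_append, length_shift, hlen, hlents]
  refine ⟨IsPT_weight_pos hpt, ?_, ?_⟩
  · rw [hlenw]
    have := forestWeight_pos (fun u hu => (hf u (List.mem_cons_of_mem _ hu)).1) hne
    omega
  · intro b hb a ha
    have hAlen : (shift (wmax (ThetaF ts)) (ThetaT t)).length = t.weight := by
      rw [length_shift, hlen]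
    rw [ThetaF_cons, List.drop_append, hAlen,
      List.drop_eq_nil_of_le (le_of_eq hAlen), Nat.sub_self, List.drop_zero,
      List.nil_append] at hb
    rw [ThetaF_cons, List.take_append, hAlen, Nat.sub_self, List.take_zero,
      List.append_nil, List.take_of_length_le (le_of_eq hAlen)] at ha
    obtain ⟨a0, ha0, rfl⟩ := mem_shift.1 ha
    have hb' : b ≤ wmax (ThetaF ts) := le_wmax_of_mem hb
    have ha' : 1 ≤ a0 := hpk.1 a0 ha0
    omega

theorem forest_last_sep {f : List LTree} (hf : TF f) (hne : f ≠ []) :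
    ∀ b ∈ (ThetaF f).drop (forestWeight f - (f.getLast hne).weight),
      ∀ a ∈ (ThetaF f).take (forestWeight f - (f.getLast hne).weight), b < a := by
  induction f with
  | nil => exact absurd rfl hne
  | cons t ts ih =>
    rcases eq_or_ne ts [] with rfl | hne'
    · intro b hb a ha
      have : forestWeight [t] - (List.getLast [t] hne).weight = 0 := by
        simp [forestWeight_cons]
      rw [this] at ha
      simp at ha
    · obtain ⟨hpt, hlen, hpk, _⟩ := hf t (by simp)
      have hlents := forest_len (TF_tail hf)
      have hgl : (t :: ts).getLast hne = ts.getLast hne' := List.getLast_cons hne'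
      have hglw : (ts.getLast hne').weight ≤ forestWeight ts :=
        weight_le_of_mem (List.getLast_mem hne')
      set r := forestWeight (t :: ts) - ((t :: ts).getLast hne).weight with hr
      have hrr : r = t.weight + (forestWeight ts - (ts.getLast hne').weight) := by
        rw [hr, hgl, forestWeight_cons]; omega
      intro b hb a ha
      have hAlen : (shift (wmax (ThetaF ts)) (ThetaT t)).length = t.weight := by
        rw [length_shift, hlen]
      rw [ThetaF_cons, List.drop_append, hAlen,
        List.drop_eq_nil_of_le (by omega), List.nil_append] at hb
      rw [ThetaF_cons, List.take_append, hAlen,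
        List.take_of_length_le (by omega)] at ha
      rcases List.mem_append.1 ha with ha | ha
      · obtain ⟨a0, ha0, rfl⟩ := mem_shift.1 ha
        have hb' : b ≤ wmax (ThetaF ts) :=
          le_wmax_of_mem (List.drop_subset _ _ hb)
        have ha' : 1 ≤ a0 := hpk.1 a0 ha0
        omega
      · have hb2 : b ∈ (ThetaF ts).drop (forestWeight ts - (ts.getLast hne').weight) := by
          have : r - t.weight = forestWeight ts - (ts.getLast hne').weight := by omega
          rwa [this] at hb
        have ha2 : a ∈ (ThetaF ts).take (forestWeight ts - (ts.getLast hne').weight) := by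
          have : r - t.weight = forestWeight ts - (ts.getLast hne').weight := by omega
          rwa [this] at ha
        exact ih (TF_tail hf) hne' b hb2 a ha2

theorem forest_last_wit {f : List LTree} (hf : TF f) (hne : f ≠ []) :
    ∀ r, forestWeight f - (f.getLast hne).weight < r → r < forestWeight f →
      ∃ b ∈ (ThetaF f).drop r, ∃ a ∈ (ThetaF f).take r, a ≤ b := by
  induction f with
  | nil => exact absurd rfl hne
  | cons t ts ih =>
    intro r hr1 hr2
    obtain ⟨hpt, hlen, hpk, hind⟩ := hf t (by simp)
    have hAlen : (shift (wmax (ThetaF ts)) (ThetaT t)).length = t.weight := by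
      rw [length_shift, hlen]
    rcases eq_or_ne ts [] with rfl | hne'
    · have hgl : (List.getLast [t] hne).weight = t.weight := by simp
      rw [forestWeight_cons, forestWeight_nil] at hr1 hr2
      rw [hgl] at hr1
      have h0r : 0 < r := by omega
      have hrw : r < t.weight := by omega
      have := hind r
      rw [GD] at this
      push_neg at this
      obtain ⟨b, hb, a, ha, hab⟩ := this h0r (by rw [hlen]; omega)
      refine ⟨b + wmax (ThetaF []) , ?_, a + wmax (ThetaF []), ?_, by omega⟩
      · rw [ThetaF_cons, List.drop_append]
        exact List.mem_append.2 (Or.inl (mem_drop_shift hb))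
      · rw [ThetaF_cons, List.take_append]
        exact List.mem_append.2 (Or.inl (mem_take_shift ha))
    · have hgl : (t :: ts).getLast hne = ts.getLast hne' := List.getLast_cons hne'
      have hglw : (ts.getLast hne').weight ≤ forestWeight ts :=
        weight_le_of_mem (List.getLast_mem hne')
      have hglpos : 0 < (ts.getLast hne').weight :=
        IsPT_weight_pos (hf _ (List.mem_cons_of_mem _ (List.getLast_mem hne'))).1
      rw [hgl, forestWeight_cons] at hr1
      rw [forestWeight_cons] at hr2
      have hrt : t.weight < r := by omega
      obtain ⟨b, hb, a, ha, hab⟩ := ih (TF_tail hf) hne' (r - t.weight) (by omega) (by omega)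
      refine ⟨b, ?_, a, ?_, hab⟩
      · rw [ThetaF_cons, List.drop_append, hAlen,
          List.drop_eq_nil_of_le (by omega), List.nil_append]
        exact hb
      · rw [ThetaF_cons, List.take_append, hAlen,
          List.take_of_length_le (by omega)]
        exact List.mem_append.2 (Or.inr ha)

theorem forest_head_wit {f : List LTree} (hf : TF f) (hne : f ≠ []) :
    ∀ r, 0 < r → r < (f.head hne).weight →
      ∃ b ∈ (ThetaF f).drop r, ∃ a ∈ (ThetaF f).take r, a ≤ b := by
  cases f with
  | nil => exact absurd rfl hne
  | cons t ts =>
    intro r h0 hrw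
    obtain ⟨hpt, hlen, hpk, hind⟩ := hf t (by simp)
    have := hind r
    rw [GD] at this
    push_neg at this
    simp only [List.head_cons] at hrw
    obtain ⟨b, hb, a, ha, hab⟩ := this h0 (by rw [hlen]; omega)
    refine ⟨b + wmax (ThetaF ts), ?_, a + wmax (ThetaF ts), ?_, by omega⟩
    · rw [ThetaF_cons, List.drop_append]
      exact List.mem_append.2 (Or.inl (mem_drop_shift hb))
    · rw [ThetaF_cons, List.take_append]
      exact List.mem_append.2 (Or.inl (mem_take_shift ha))
-- Section 7: the bundle
theorem bundle : ∀ n : ℕ,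
    (∀ t, IsPT t → t.weight = n →
      (ThetaT t).length = n ∧ IsPacked (ThetaT t) ∧ Indec (ThetaT t)) ∧
    (∀ f, (∀ u ∈ f, IsPT u) → forestWeight f = n →
      (ThetaF f).length = n ∧ IsPacked (ThetaF f)) := by
  intro n
  induction n using Nat.strong_induction_on with
  | _ n IH =>
    have IHF : ∀ f, (∀ u ∈ f, IsPT u) → forestWeight f < n →
        (ThetaF f).length = forestWeight f ∧ IsPacked (ThetaF f) :=
      fun f hf hlt => (IH _ hlt).2 f hf rfl
    have IHT : ∀ t, IsPT t → t.weight < n →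
        (ThetaT t).length = t.weight ∧ IsPacked (ThetaT t) ∧ Indec (ThetaT t) :=
      fun t ht hlt => (IH _ hlt).1 t ht rfl
    have hTFsmall : ∀ f, (∀ u ∈ f, IsPT u) → forestWeight f < n → TF f := by
      intro f hf hlt u hu
      have hu' : u.weight < n := lt_of_le_of_lt (weight_le_of_mem hu) hlt
      exact ⟨hf u hu, (IHT u (hf u hu) hu').1, (IHT u (hf u hu) hu').2.1,
        (IHT u (hf u hu) hu').2.2⟩
    have treePart : ∀ t, IsPT t → t.weight = n →
        (ThetaT t).length = n ∧ IsPacked (ThetaT t) ∧ Indec (ThetaT t) := by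
      intro t ht hw
      cases t with
      | node I fl fr =>
        obtain ⟨hIne, hIs, hIge, hIlt0⟩ := IsPT_bounds ht
        have hIp : 0 < I.length := List.length_pos_iff.2 hIne
        rw [weight_node] at hw
        have hflpt : ∀ u ∈ fl, IsPT u := by
          cases ht with | mk _ _ _ _ _ _ _ _ h _ => exact h
        have hfrpt : ∀ u ∈ fr, IsPT u := by
          cases ht with | mk _ _ _ _ _ _ _ _ _ h => exact h
        have hfl_lt : forestWeight fl < n := by omega
        have hfr_lt : forestWeight fr < n := by omega
        obtain ⟨hls_len, hls_pk⟩ := IHF fl hflpt hfl_lt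
        obtain ⟨hxs_len, hxs_pk⟩ := IHF fr hfrpt hfr_lt
        set xs := ThetaF fr with hxs_def
        set ls := ThetaF fl with hls_def
        set c := wmax xs with hc_def
        set M := wmax xs + wmax ls + 1 with hM_def
        have hIlt : ∀ i ∈ I, i < 1 + I.length + xs.length := by
          rw [hxs_len]; exact hIlt0
        have hxsM : ∀ a ∈ xs, a < M := by
          intro a ha
          have := le_wmax_of_mem ha
          omega
        have hxsM' : ∀ a ∈ xs, a ≠ M := fun a ha => Nat.ne_of_lt (hxsM a ha)
        have hplen : (place M 1 I xs).length = I.length + xs.length :=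
          place_length M hIs hIge hIlt
        have hlen : (ThetaT (.node I fl fr)).length = n := by
          rw [ThetaT_node, List.length_append, length_shift, hplen, ← hls_def, hls_len]
          omega
        have hwmaxP : wmax (place M 1 I xs) = M := by
          refine le_antisymm (wmax_le_iff.2 ?_) (le_wmax_of_mem (M_mem_place hIs hIge hIlt hIne))
          intro b hb
          rcases place_mem b hb with rfl | hb
          · exact le_refl _
          · exact le_of_lt (hxsM b hb)
        have hwmaxT : wmax (ThetaT (.node I fl fr)) = M := by
          rw [ThetaT_node, wmax_append, ← hls_def, ← hxs_def, ← hc_def, ← hM_def, hwmaxP]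
          rcases eq_or_ne ls [] with hls | hls
          · rw [hls]; simp [wmax_nil]
          · rw [wmax_shift hls]
            have : wmax ls + c ≤ M := by omega
            omega
        have hpacked : IsPacked (ThetaT (.node I fl fr)) := by
          constructor
          · intro x hx
            rw [ThetaT_node] at hx
            rcases List.mem_append.1 hx with hx | hx
            · obtain ⟨b, hb, rfl⟩ := mem_shift.1 hx
              have := hls_pk.1 b hb
              omega
            · rcases place_mem x hx with rfl | hx
              · omega
              · exact hxs_pk.1 x hx
          · intro i hi0 hile
            rw [hwmaxT, hM_def] at hile
            rw [ThetaT_node]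
            by_cases h1 : i ≤ wmax xs
            · refine List.mem_append.2 (Or.inr ?_)
              exact mem_place_of_mem i (hxs_pk.2 i hi0 h1)
            · by_cases h2 : i ≤ wmax xs + wmax ls
              · refine List.mem_append.2 (Or.inl ?_)
                push_neg at h1
                refine mem_shift.2 ⟨i - wmax xs, hls_pk.2 (i - wmax xs) (by omega) (by omega), ?_⟩
                rw [← hc_def]
                omega
              · have : i = M := by rw [hM_def]; omega
                subst this
                exact List.mem_append.2 (Or.inr (M_mem_place hIs hIge hIlt hIne))
        refine ⟨hlen, hpacked, ?_⟩
        intro j hGD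
        obtain ⟨hj0, hjlen, hcomp⟩ := hGD
        rw [ThetaT_node] at hjlen hcomp
        set A := shift c ls with hA_def
        set P := place M 1 I xs with hP_def
        have hallle : ∀ a ∈ A ++ P, a ≤ M := by
          have := hwmaxT
          rw [ThetaT_node] at this
          intro a ha
          rw [← this]
          exact le_wmax_of_mem ha
        have hMnotback : M ∉ (A ++ P).drop j → False → False := fun _ f => f
        by_cases hMb : M ∈ (A ++ P).drop j
        · obtain ⟨a, ha⟩ := List.exists_mem_of_ne_nil ((A ++ P).take j) (by
            intro hc'
            have : ((A ++ P).take j).length = 0 := by rw [hc']; rfl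
            rw [List.length_take] at this
            omega)
          have := hcomp M hMb a ha
          have := hallle a (List.take_subset _ _ ha)
          omega
        · have hAlen : A.length = forestWeight fl := by
            rw [hA_def, length_shift]
            exact hls_len
          have hjA : A.length < j := by
            by_contra hjle
            push_neg at hjle
            refine hMb ?_
            rw [List.drop_append]
            refine List.mem_append.2 (Or.inr ?_)
            have : j - A.length = 0 := by omega
            rw [this, List.drop_zero]
            exact M_mem_place hIs hIge hIlt hIne
          set j' := j - A.length with hj'_def
          have hj'pos : 1 ≤ j' := by omega
          have hdropu : (A ++ P).drop j = P.drop j' := by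
            rw [List.drop_append, List.drop_eq_nil_of_le (by omega),
              List.nil_append]
          have hallILe : ∀ i ∈ I, i < 1 + j' := by
            intro i hi
            by_contra hbig
            push_neg at hbig
            refine hMb ?_
            rw [hdropu]
            exact M_mem_drop_place hIs hIge hIlt j' i hi hbig
          have hPdrop : P.drop j' = xs.drop (j' - I.length) :=
            place_drop hIs hIge j' hallILe
          have hdropne : (A ++ P).drop j ≠ [] := by
            intro hc'
            have : ((A ++ P).drop j).length = 0 := by rw [hc']; rfl
            rw [List.length_drop] at this
            omega
          have hxsne : j' - I.length < xs.length := by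
            by_contra hge
            push_neg at hge
            refine hdropne ?_
            rw [hdropu, hPdrop]
            exact List.drop_eq_nil_of_le hge
          have hfrne : fr ≠ [] := by
            intro hc'
            rw [hc'] at hxs_def
            have : xs = [] := by rw [hxs_def, ThetaF_nil]
            rw [this] at hxsne
            simp at hxsne
          have hconstr : rightWeight (.node I fl fr) + 1 - I.getLastI ≤ fr.getLastI.weight := by
            cases ht with | mk _ _ _ _ _ _ _ h1 _ _ => exact (h1 hfrne).2.2.2
          rw [getLastI_eq_getLast hIne, rightWeight_node, tree_getLastI_eq_getLast hfrne]
            at hconstr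
          set ld := (fr.getLast hfrne).weight with hld_def
          have hldle : ld ≤ forestWeight fr := weight_le_of_mem (List.getLast_mem hfrne)
          have higl : I.getLast hIne ≤ j' := by
            have := hallILe _ (List.getLast_mem hIne)
            omega
          have hglub : I.getLast hIne < 1 + I.length + forestWeight fr := by
            have := hIlt0 _ (List.getLast_mem hIne)
            exact this
          set r := j' - I.length with hr_def
          have hrlow : forestWeight fr - ld < r := by omega
          have hrhigh : r < forestWeight fr := by omega
          have hTFfr : TF fr := hTFsmall fr hfrpt hfr_lt
          obtain ⟨b, hb, a, ha, hab⟩ := forest_last_wit hTFfr hfrne r hrlow hrhigh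
          have hbu : b ∈ (A ++ P).drop j := by
            rw [hdropu, hPdrop]
            exact hb
          have hau : a ∈ (A ++ P).take j := by
            rw [List.take_append, List.take_of_length_le (by omega)]
            refine List.mem_append.2 (Or.inr ?_)
            exact place_take_mem hIs hIge j' hallILe a ha
          have := hcomp b hbu a hau
          omega
    refine ⟨treePart, ?_⟩
    intro f hf hw
    cases f with
    | nil =>
      rw [ThetaF_nil]
      rw [forestWeight_nil] at hw
      exact ⟨by rw [← hw]; rfl, IsPacked_nil⟩
    | cons t ts =>
      rw [forestWeight_cons] at hw
      have hpt := hf t (by simp)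
      have hwt1 : 1 ≤ t.weight := IsPT_weight_pos hpt
      have hts : forestWeight ts < n := by omega
      obtain ⟨hlents, hpkts⟩ := IHF ts (fun u hu => hf u (List.mem_cons_of_mem _ hu)) hts
      have htfacts : (ThetaT t).length = t.weight ∧ IsPacked (ThetaT t) := by
        rcases eq_or_ne t.weight n with he | hne
        · obtain ⟨h1, h2, _⟩ := treePart t hpt he
          rw [he]
          exact ⟨h1, h2⟩
        · obtain ⟨h1, h2, _⟩ := IHT t hpt (by omega)
          exact ⟨h1, h2⟩
      constructor
      · rw [ThetaF_cons, List.length_append, length_shift, htfacts.1, hlents]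
        omega
      · rw [ThetaF_cons]
        exact packed_star htfacts.2 hpkts
-- Section 8: corollaries of bundle and misc helpers
theorem thetaT_length {t : LTree} (h : IsPT t) : (ThetaT t).length = t.weight :=
  ((bundle _).1 t h rfl).1
theorem thetaT_packed {t : LTree} (h : IsPT t) : IsPacked (ThetaT t) :=
  ((bundle _).1 t h rfl).2.1
theorem thetaT_indec {t : LTree} (h : IsPT t) : Indec (ThetaT t) :=
  ((bundle _).1 t h rfl).2.2
theorem thetaF_length {f : List LTree} (hf : ∀ u ∈ f, IsPT u) :
    (ThetaF f).length = forestWeight f := ((bundle _).2 f hf rfl).1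
theorem thetaF_packed {f : List LTree} (hf : ∀ u ∈ f, IsPT u) : IsPacked (ThetaF f) :=
  ((bundle _).2 f hf rfl).2
theorem TF_of {f : List LTree} (hf : ∀ u ∈ f, IsPT u) : TF f :=
  fun u hu => ⟨hf u hu, thetaT_length (hf u hu), thetaT_packed (hf u hu), thetaT_indec (hf u hu)⟩

theorem forest_head_sep {t0 : LTree} {ts0 : List LTree} (hf : TF (t0 :: ts0)) :
    ∀ b ∈ (ThetaF (t0 :: ts0)).drop t0.weight,
      ∀ a ∈ (ThetaF (t0 :: ts0)).take t0.weight, b < a := by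
  rcases eq_or_ne ts0 [] with rfl | hne
  · intro b hb a ha
    have hlen : (ThetaF [t0]).length = t0.weight := by
      rw [forest_len hf, forestWeight_cons, forestWeight_nil]
      omega
    rw [List.drop_eq_nil_of_le (le_of_eq hlen)] at hb
    simp at hb
  · exact (forest_GD_head hf hne).2.2

theorem wmax_map_sub {c : ℕ} {L : List ℕ} (hne : L ≠ []) (hge : ∀ a ∈ L, c ≤ a) :
    wmax (L.map (· - c)) = wmax L - c := by
  induction L with
  | nil => exact absurd rfl hne
  | cons a L ih =>
    rcases eq_or_ne L [] with rfl | hne'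
    · simp [wmax_cons, wmax_nil]
    · rw [List.map_cons, wmax_cons, wmax_cons, ih hne' (fun x hx => hge x (List.mem_cons_of_mem _ hx))]
      have h1 := hge a (by simp)
      have h2 : c ≤ wmax L := hge _ (List.mem_cons_of_mem _ (wmax_mem hne'))
      omega

theorem headI_mem {l : List ℕ} (hne : l ≠ []) : l.headI ∈ l := by
  cases l with
  | nil => exact absurd rfl hne
  | cons a l => simp

theorem sorted_head_le {I : List ℕ} (hs : I.Pairwise (· < ·)) : ∀ x ∈ I, I.headI ≤ x := by
  cases I with
  | nil => simp
  | cons i I =>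
    intro x hx
    rcases List.mem_cons.1 hx with rfl | hx
    · simp
    · simp only [List.headI_cons]
      exact le_of_lt ((List.pairwise_cons.1 hs).1 x hx)

theorem posOf_allM {M k : ℕ} {s : List ℕ} (h : ∀ a ∈ s, a = M) :
    posOf M k s = List.range' k s.length := by
  induction s generalizing k with
  | nil => simp
  | cons a s ih =>
    rw [posOf_cons, if_pos (h a (by simp)), List.length_cons, List.range'_succ,
      ih (fun x hx => h x (List.mem_cons_of_mem _ hx))]

theorem mem_filter_ne {M a : ℕ} {s : List ℕ} : a ∈ s.filter (· ≠ M) ↔ a ∈ s ∧ a ≠ M := by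
  rw [List.mem_filter]
  simp

theorem append_take_big {L s : List ℕ} {m : ℕ} (h : L.length ≤ m) :
    (L ++ s).take m = L ++ s.take (m - L.length) := by
  rw [List.take_append, List.take_of_length_le h]

theorem append_drop_big {L s : List ℕ} {m : ℕ} (h : L.length ≤ m) :
    (L ++ s).drop m = s.drop (m - L.length) := by
  rw [List.drop_append, List.drop_eq_nil_of_le h, List.nil_append]

theorem drop_ne_nil_len {w : List ℕ} {m : ℕ} (h : m < w.length) : w.drop m ≠ [] := by
  intro hc
  have : (w.drop m).length = 0 := by rw [hc]; rfl
  rw [List.length_drop] at this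
  omega

theorem take_ne_nil_len {w : List ℕ} {m : ℕ} (h1 : 0 < m) (h2 : w ≠ []) : w.take m ≠ [] := by
  intro hc
  have : (w.take m).length = 0 := by rw [hc]; rfl
  rw [List.length_take] at this
  have : w.length = 0 := by omega
  exact h2 (List.length_eq_zero_iff.1 this)
-- Section 9: tree-level existence and uniqueness
theorem partT_aux (n : ℕ)
    (IHW : ∀ m < n, ∀ w, IsPacked w → w.length = m →
      ∃! f, (∀ x ∈ f, IsPT x) ∧ ThetaF f = w) :
    ∀ u, IsPacked u → Indec u → u ≠ [] → u.length = n →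
      ∃! t, IsPT t ∧ ThetaT t = u := by
  classical
  intro u hpk hind hune hulen
  set M := wmax u with hM_def
  have hM1 : 1 ≤ M := wmax_pos_of_packed hpk hune
  have hMmem : M ∈ u := wmax_mem hune
  have hule : ∀ a ∈ u, a ≤ M := fun a ha => le_wmax_of_mem ha
  set Pp : ℕ → Prop := fun l => M ∉ u.take l ∧
    ∀ b ∈ (u.drop l).filter (· ≠ M), ∀ a ∈ u.take l, b < a with hPp
  have hP0 : Pp 0 := by
    simp only [hPp]
    constructor <;> simp
  set L0 := Nat.findGreatest Pp n with hL0def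
  have hPl : Pp L0 := Nat.findGreatest_spec (Nat.zero_le n) hP0
  have hmax : ∀ m, L0 < m → m ≤ n → ¬Pp m := fun m h1 h2 => Nat.findGreatest_is_greatest h1 h2
  have hL0le : L0 ≤ n := Nat.findGreatest_le n
  simp only [hPp] at hPl
  obtain ⟨hMnL, hsep⟩ := hPl
  set L := u.take L0 with hLdef
  set s := u.drop L0 with hsdef
  have hLs : L ++ s = u := List.take_append_drop _ _
  have hMs : M ∈ s := by
    have h2 := hMmem
    rw [← hLs] at h2
    rcases List.mem_append.1 h2 with h | h
    · exact absurd h hMnL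
    · exact h
  have hsne : s ≠ [] := fun hc => by rw [hc] at hMs; simp at hMs
  have hslen : s.length = n - L0 := by rw [hsdef, List.length_drop, hulen]
  have hL0lt : L0 < n := by
    by_contra hge
    push_neg at hge
    have : s.length = 0 := by omega
    exact hsne (List.length_eq_zero_iff.1 this)
  have hLlen : L.length = L0 := by
    rw [hLdef, List.length_take, hulen]
    omega
  set I := posOf M 1 s with hIdef
  set xs := s.filter (· ≠ M) with hxsdef
  have hIne : I ≠ [] := fun hc => (posOf_eq_nil_iff.1 hc) hMs
  have hIp : 0 < I.length := List.length_pos_iff.2 hIne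
  have hsplace : place M 1 I xs = s := place_posOf M 1 s
  have hIs : I.Pairwise (· < ·) := posOf_sorted M 1 s
  have hIge : ∀ i ∈ I, 1 ≤ i := fun i hi => posOf_ge hi
  have hlen_ps : I.length + xs.length = s.length := posOf_filter_len M 1 s
  have hIlt : ∀ i ∈ I, i < 1 + I.length + xs.length := by
    intro i hi
    have := posOf_lt hi
    omega
  have hxsM : ∀ a ∈ xs, a ≠ M := fun a ha => (mem_filter_ne.1 ha).2
  have hxss : ∀ a ∈ xs, a ∈ s := fun a ha => (mem_filter_ne.1 ha).1
  have hxsu : ∀ a ∈ xs, a ∈ u := by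
    intro a ha
    rw [← hLs]
    exact List.mem_append.2 (Or.inr (hxss a ha))
  have hLu : ∀ a ∈ L, a ∈ u := fun a ha => List.take_subset _ _ ha
  have hLxs : ∀ b ∈ xs, ∀ a ∈ L, b < a := hsep
  have hLnM : ∀ a ∈ L, a ≠ M := fun a ha hc => hMnL (hc ▸ ha)
  set c := wmax xs with hcdef
  have hxsle : ∀ b ∈ xs, b ≤ c := fun b hb => le_wmax_of_mem hb
  have hcM : c < M := by
    rcases eq_or_ne xs [] with h | h
    · have : c = 0 := by rw [hcdef, h, wmax_nil]
      omega
    · have h1 : c ∈ xs := wmax_mem h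
      have := hule c (hxsu c h1)
      have := hxsM c h1
      omega
  have hLgec : ∀ a ∈ L, c + 1 ≤ a := by
    intro a ha
    rcases eq_or_ne xs [] with h | h
    · have h0 : c = 0 := by rw [hcdef, h, wmax_nil]
      have := hpk.1 a (hLu a ha)
      omega
    · exact hLxs c (wmax_mem h) a ha
  have hxspk : IsPacked xs := by
    constructor
    · exact fun a ha => hpk.1 a (hxsu a ha)
    · intro v hv0 hvc
      have hvu : v ∈ u := hpk.2 v hv0 (by omega)
      rw [← hLs] at hvu
      rcases List.mem_append.1 hvu with h | h
      · have := hLgec v h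
        omega
      · refine mem_filter_ne.2 ⟨h, ?_⟩
        omega
  set vL := L.map (· - c) with hvLdef
  have hvLlen : vL.length = L0 := by rw [hvLdef, List.length_map, hLlen]
  have hshift : shift c vL = L := shift_unshift (fun a ha => by have := hLgec a ha; omega)
  have hvLpk : IsPacked vL := by
    constructor
    · intro x hx
      obtain ⟨a, ha, rfl⟩ := List.mem_map.1 hx
      have := hLgec a ha
      omega
    · intro v hv0 hvle
      rcases eq_or_ne L [] with h | h
      · have hv : vL = [] := by simp [hvLdef, h]
        rw [hv, wmax_nil] at hvle
        omega
      · rw [hvLdef, wmax_map_sub h (fun a ha => by have := hLgec a ha; omega)] at hvle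
        have hwLM : wmax L ≤ M := hule _ (hLu _ (wmax_mem h))
        have hvcu : v + c ∈ u := hpk.2 (v + c) (by omega) (by omega)
        rw [← hLs] at hvcu
        rcases List.mem_append.1 hvcu with hh | hh
        · exact List.mem_map.2 ⟨v + c, hh, by omega⟩
        · by_cases hvM : v + c = M
          · exfalso
            have hwL : wmax L < M := by
              rcases lt_or_eq_of_le hwLM with h' | h'
              · exact h'
              · exact absurd (h' ▸ wmax_mem h) (fun hc' => hLnM _ hc' h')
            omega
          · have : v + c ∈ xs := mem_filter_ne.2 ⟨hh, hvM⟩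
            have := hxsle _ this
            omega
  have hMeq : M = c + wmax vL + 1 := by
    rcases eq_or_ne L [] with h | h
    · have hv0 : wmax vL = 0 := by rw [hvLdef, h]; rfl
      rw [hv0]
      by_contra hne'
      have hMc : c + 1 < M := by omega
      have hMm1 : M - 1 ∈ u := hpk.2 (M - 1) (by omega) (by omega)
      rw [← hLs, h] at hMm1
      simp only [List.nil_append] at hMm1
      have : M - 1 ∈ xs := mem_filter_ne.2 ⟨hMm1, by omega⟩
      have := hxsle _ this
      omega
    · have hLM : wmax L = M - 1 := by
        have hle' : wmax L ≤ M - 1 := by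
          have h1 := hule _ (hLu _ (wmax_mem h))
          have h2 := hLnM _ (wmax_mem h)
          omega
        have hge' : M - 1 ≤ wmax L := by
          have hc1 := hLgec _ (wmax_mem h)
          by_cases hM1c : M - 1 ≤ c
          · omega
          · have hMm1 : M - 1 ∈ u := hpk.2 (M - 1) (by omega) (by omega)
            rw [← hLs] at hMm1
            rcases List.mem_append.1 hMm1 with hh | hh
            · exact le_wmax_of_mem hh
            · have : M - 1 ∈ xs := mem_filter_ne.2 ⟨hh, by omega⟩
              have := hxsle _ this
              omega
        omega
      rw [hvLdef, wmax_map_sub h (fun a ha => by have := hLgec a ha; omega), hLM]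
      have := hLgec _ (wmax_mem h)
      omega
  have hxslen_lt : xs.length < n := by omega
  obtain ⟨fl, ⟨hflpt, hflw⟩, hfluniq⟩ := IHW vL.length (by omega) vL hvLpk rfl
  obtain ⟨fr, ⟨hfrpt, hfrw⟩, hfruniq⟩ := IHW xs.length (by omega) xs hxspk rfl
  have hfrlen : forestWeight fr = xs.length := by rw [← thetaF_length hfrpt, hfrw]
  have hfllen : forestWeight fl = L0 := by rw [← thetaF_length hflpt, hflw, hvLlen]
  have hTt : ThetaT (.node I fl fr) = u := by
    rw [ThetaT_node, hflw, hfrw, ← hcdef, ← hMeq, hshift, hsplace]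
    exact hLs
  have hIsPT : IsPT (.node I fl fr) := by
    refine IsPT.mk I fl fr hIne hIs hIge ?_ ?_ hflpt hfrpt
    · intro hfr0
      rw [hfr0] at hfrw
      rw [ThetaF_nil] at hfrw
      have hxs0 : xs = [] := hfrw.symm
      have hallM : ∀ a ∈ s, a = M := by
        have hfil : s.filter (· ≠ M) = [] := by rw [← hxsdef]; exact hxs0
        have h3 := List.filter_eq_nil_iff.1 hfil
        intro a ha
        have h2 := h3 a ha
        simpa using h2
      have hIr : I = List.range' 1 s.length := by rw [hIdef]; exact posOf_allM hallM
      rw [hIr, List.length_range']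
    · intro hfrne
      have hxsne : xs ≠ [] := by
        intro hc
        have := forestWeight_pos hfrpt hfrne
        rw [hfrlen, hc] at this
        simp at this
      have hxslen1 : 1 ≤ xs.length := List.length_pos_iff.2 hxsne
      have hrW : rightWeight (.node I fl fr) = I.length + xs.length := by
        rw [rightWeight_node, hfrlen]
      have hglmem := List.getLast_mem hIne
      have hgl_eq : I.getLastI = I.getLast hIne := getLastI_eq_getLast hIne
      have hglub : I.getLast hIne < 1 + I.length + xs.length := hIlt _ hglmem
      have hh1 : 1 ≤ I.headI := hIge _ (headI_mem hIne)
      refine ⟨hh1, ?_, ?_, ?_⟩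
      · -- headI ≤ weight of head tree of fr
        rcases fr with _ | ⟨t0, ts0⟩
        · exact absurd rfl hfrne
        · rw [tree_headI_eq_head hfrne, List.head_cons]
          by_contra hgt
          push_neg at hgt
          have hl1pos : 0 < t0.weight := IsPT_weight_pos (hfrpt t0 (by simp))
          have hl1le : t0.weight ≤ xs.length := by
            rw [← hfrlen, forestWeight_cons]
            omega
          have hIl1 : ∀ i ∈ I, 1 + t0.weight ≤ i := by
            intro i hi
            have := sorted_head_le hIs i hi
            omega
          refine hmax (L0 + t0.weight) (by omega) (by omega) ?_
          simp only [hPp]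
          have htake : u.take (L0 + t0.weight) = L ++ xs.take t0.weight := by
            rw [← hLs, append_take_big (by rw [hLlen]; omega), hLlen]
            congr 1
            have : L0 + t0.weight - L0 = t0.weight := by omega
            rw [this, ← hsplace, place_take_early t0.weight hIl1]
          have hdrop : (u.drop (L0 + t0.weight)).filter (· ≠ M) = xs.drop t0.weight := by
            rw [← hLs, append_drop_big (by rw [hLlen]; omega), hLlen]
            have h1 : L0 + t0.weight - L0 = t0.weight := by omega
            rw [h1, ← hsplace, place_drop_early hIs hIge hIlt t0.weight hIl1]
            refine filter_place hIs hIl1 ?_ (fun a ha => hxsM a (List.drop_subset _ _ ha))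
            intro i hi
            have h2 := hIlt i hi
            rw [List.length_drop]
            omega
          constructor
          · rw [htake]
            intro hMm
            rcases List.mem_append.1 hMm with h | h
            · exact hLnM _ h rfl
            · exact hxsM _ (List.take_subset _ _ h) rfl
          · intro b hb a ha
            rw [hdrop] at hb
            rw [htake] at ha
            rcases List.mem_append.1 ha with h | h
            · exact hLxs b (List.drop_subset _ _ hb) a h
            · have hsep2 := forest_head_sep (TF_of hfrpt)
              rw [hfrw] at hsep2
              exact hsep2 b hb a h
      · omega
      · -- last constraint
        rw [tree_getLastI_eq_getLast hfrne, hgl_eq, hrW]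
        by_contra hgt
        push_neg at hgt
        set ld := (fr.getLast hfrne).weight with hld_def
        have hldpos : 0 < ld := IsPT_weight_pos (hfrpt _ (List.getLast_mem hfrne))
        have hldle : ld ≤ xs.length := by
          rw [← hfrlen]
          exact weight_le_of_mem (List.getLast_mem hfrne)
        have hip_le : I.getLast hIne ≤ I.length + xs.length - ld := by omega
        set j := L0 + I.length + (xs.length - ld) with hj_def
        have hIj : ∀ i ∈ I, i < 1 + (I.length + (xs.length - ld)) := by
          intro i hi
          have := sorted_le_getLast hIs hIne i hi
          omega
        refine hind j ⟨by omega, by omega, ?_⟩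
        intro b hb a ha
        have hdropj : u.drop j = xs.drop (xs.length - ld) := by
          rw [← hLs, append_drop_big (by rw [hLlen]; omega), hLlen]
          have h1 : j - L0 = I.length + (xs.length - ld) := by omega
          rw [h1, ← hsplace, place_drop hIs hIge _ hIj]
          congr 1
          omega
        have htakej : u.take j = L ++ (place M 1 I xs).take (I.length + (xs.length - ld)) := by
          rw [← hLs, append_take_big (by rw [hLlen]; omega), hLlen, hsplace]
          congr 2
          omega
        rw [hdropj] at hb
        rw [htakej] at ha
        have hbxs : b ∈ xs := List.drop_subset _ _ hb
        rcases List.mem_append.1 ha with h | h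
        · exact hLxs b hbxs a h
        · by_cases haM : a = M
          · subst haM
            have := hxsle b hbxs
            omega
          · have hafil : a ∈ xs.take (xs.length - ld) := by
              have h2 : a ∈ ((place M 1 I xs).take (I.length + (xs.length - ld))).filter (· ≠ M) :=
                mem_filter_ne.2 ⟨h, haM⟩
              rw [place_take_filter hIs hIge _ hIj hxsM] at h2
              have h3 : I.length + (xs.length - ld) - I.length = xs.length - ld := by omega
              rwa [h3] at h2
            have hsep3 := forest_last_sep (TF_of hfrpt) hfrne
            rw [hfrw, hfrlen] at hsep3
            exact hsep3 b hb a hafil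
  refine ⟨.node I fl fr, ⟨hIsPT, hTt⟩, ?_⟩
  rintro t' ⟨hpt', hTt'⟩
  cases t' with
  | node I' fl' fr' =>
    obtain ⟨hIne', hIs', hIge', hIlt0'⟩ := IsPT_bounds hpt'
    have hflpt' : ∀ x ∈ fl', IsPT x := by
      cases hpt' with | mk _ _ _ _ _ _ _ _ h _ => exact h
    have hfrpt' : ∀ x ∈ fr', IsPT x := by
      cases hpt' with | mk _ _ _ _ _ _ _ _ _ h => exact h
    have hcon' : fr' ≠ [] → (1 ≤ I'.headI ∧ I'.headI ≤ fr'.headI.weight ∧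
        1 ≤ rightWeight (.node I' fl' fr') + 1 - I'.getLastI ∧
        rightWeight (.node I' fl' fr') + 1 - I'.getLastI ≤ fr'.getLastI.weight) := by
      cases hpt' with | mk _ _ _ _ _ _ _ h _ _ => exact h
    have hran' : fr' = [] → I' = List.range' 1 I'.length := by
      cases hpt' with | mk _ _ _ _ _ _ h _ _ _ => exact h
    have hls'len : (ThetaF fl').length = forestWeight fl' := thetaF_length hflpt'
    have hxs'len : (ThetaF fr').length = forestWeight fr' := thetaF_length hfrpt'
    have hls'pk : IsPacked (ThetaF fl') := thetaF_packed hflpt'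
    have hxs'pk : IsPacked (ThetaF fr') := thetaF_packed hfrpt'
    rw [ThetaT_node] at hTt'
    set xs' := ThetaF fr' with hxs'def
    set ls' := ThetaF fl' with hls'def
    set c' := wmax xs' with hc'def
    set M' := wmax xs' + wmax ls' + 1 with hM'def
    set A' := shift c' ls' with hA'def
    set P' := place M' 1 I' xs' with hP'def
    have hIlt' : ∀ i ∈ I', i < 1 + I'.length + xs'.length := by
      intro i hi
      have := hIlt0' i hi
      omega
    have hxs'M : ∀ a ∈ xs', a < M' := by
      intro a ha
      have := le_wmax_of_mem ha
      omega
    have hxs'ne : ∀ a ∈ xs', a ≠ M' := fun a ha => Nat.ne_of_lt (hxs'M a ha)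
    have hwmaxP' : wmax P' = M' := by
      refine le_antisymm (wmax_le_iff.2 ?_)
        (le_wmax_of_mem (M_mem_place hIs' hIge' hIlt' hIne'))
      intro b hb
      rcases place_mem b hb with rfl | hb
      · exact le_refl _
      · exact le_of_lt (hxs'M b hb)
    have hA'lenw : A'.length = forestWeight fl' := by
      rw [hA'def, length_shift]
      exact hls'len
    have hP'len : P'.length = I'.length + xs'.length :=
      place_length M' hIs' hIge' hIlt'
    have hM'M : M' = M := by
      rw [hM_def, ← hTt', wmax_append, hwmaxP']
      rcases eq_or_ne ls' [] with h | h
      · rw [hA'def, h]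
        simp [wmax_nil]
      · rw [hA'def, wmax_shift h, max_eq_right (by omega : wmax ls' + c' ≤ M')]
    have hulen2 : forestWeight fl' + (I'.length + xs'.length) = n := by
      have := congrArg List.length hTt'
      rw [List.length_append, hA'lenw, hP'len, hulen] at this
      exact this
    have hI'p : 0 < I'.length := List.length_pos_iff.2 hIne'
    have hL0eq : L0 = forestWeight fl' := by
      rw [hL0def]
      refine Nat.findGreatest_eq_iff.2 ⟨by omega, ?_, ?_⟩
      · intro _
        simp only [hPp]
        constructor
        · rw [← hTt', ← hA'lenw, List.take_left]
          intro hMm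
          rw [hA'def] at hMm
          obtain ⟨a0, ha0, haeq⟩ := mem_shift.1 hMm
          have := le_wmax_of_mem ha0
          omega
        · intro b hb a ha
          rw [← hTt', ← hA'lenw, List.drop_left] at hb
          rw [← hTt', ← hA'lenw, List.take_left] at ha
          rw [← hM'M] at hb
          rw [hP'def, filter_place hIs' hIge' hIlt' hxs'ne] at hb
          rw [hA'def] at ha
          obtain ⟨a0, ha0, rfl⟩ := mem_shift.1 ha
          have hb' : b ≤ c' := le_wmax_of_mem hb
          have ha' : 1 ≤ a0 := hls'pk.1 a0 ha0
          omega
      · intro m hm1 hm2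
        simp only [hPp]
        rintro ⟨hm3, hm4⟩
        have hg1 : 1 ≤ m - forestWeight fl' := by omega
        set g := m - forestWeight fl' with hgdef
        by_cases hex : ∃ i ∈ I', i < 1 + g
        · obtain ⟨i, hi, hilt⟩ := hex
          refine hm3 ?_
          rw [← hTt', append_take_big (by omega : A'.length ≤ m)]
          refine List.mem_append.2 (Or.inr ?_)
          rw [← hM'M]
          have hgg : m - A'.length = g := by omega
          rw [hgg, hP'def]
          exact M_mem_take_place hIs' hIge' hIlt' g i hi hilt
        · push_neg at hex
          have hIg : ∀ i ∈ I', 1 + g ≤ i := fun i hi => hex i hi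
          have hfr'ne : fr' ≠ [] := by
            intro hc'
            have h1 := hran' hc'
            have hhead1 : I'.headI = 1 := by
              rw [h1]
              cases hk : I'.length with
              | zero => omega
              | succ k =>
                rw [List.range'_succ]
                rfl
            have := hIg _ (headI_mem hIne')
            omega
          obtain ⟨_, hhead', _, _⟩ := hcon' hfr'ne
          rcases hfr : fr' with _ | ⟨t0, ts0⟩
          · exact hfr'ne hfr
          · rw [hfr] at hhead'
            rw [tree_headI_eq_head (by simp : t0 :: ts0 ≠ ([] : List LTree)),
              List.head_cons] at hhead'
            have hI1g : 1 + g ≤ I'.headI := hIg _ (headI_mem hIne')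
            have hglt : g < t0.weight := by omega
            obtain ⟨b, hb, a, ha, hab⟩ :=
              forest_head_wit (TF_of (hfr ▸ hfrpt')) (by simp) g (by omega)
                (by rw [List.head_cons]; exact hglt)
            have hbxs : b ∈ xs'.drop g := by
              rw [hxs'def, hfr]
              exact hb
            have haxs : a ∈ xs'.take g := by
              rw [hxs'def, hfr]
              exact ha
            have hbm : b ∈ (u.drop m).filter (· ≠ M) := by
              refine mem_filter_ne.2 ⟨?_, ?_⟩
              · rw [← hTt', append_drop_big (by omega : A'.length ≤ m)]
                have hgg : m - A'.length = g := by omega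
                rw [hgg, hP'def]
                exact place_drop_mem g b hbxs
              · have := hxs'M b (List.drop_subset _ _ hbxs)
                omega
            have ham : a ∈ u.take m := by
              rw [← hTt', append_take_big (by omega : A'.length ≤ m)]
              refine List.mem_append.2 (Or.inr ?_)
              have hgg : m - A'.length = g := by omega
              rw [hgg, hP'def, place_take_early g hIg]
              exact haxs
            have := hm4 b hbm a ham
            omega
    have hA'L : A' = L := by
      have h1 : A' = (A' ++ P').take A'.length := List.take_left.symm
      rw [hTt', hA'lenw, ← hL0eq, ← hLdef] at h1
      exact h1
    have hP's : P' = s := by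
      have h1 : P' = (A' ++ P').drop A'.length := List.drop_left.symm
      rw [hTt', hA'lenw, ← hL0eq, ← hsdef] at h1
      exact h1
    have hxs'xs : xs' = xs := by
      rw [hxsdef, ← hP's, ← hM'M, hP'def, filter_place hIs' hIge' hIlt' hxs'ne]
    have hI'I : I' = I := by
      rw [hIdef, ← hP's, ← hM'M, hP'def, posOf_place hIs' hIge' hIlt' hxs'ne]
    have hls'vL : ls' = vL := by
      refine shift_injective c ?_
      have h1 : shift c' ls' = L := by rw [← hA'def]; exact hA'L
      rw [hc'def, hxs'xs, ← hcdef] at h1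
      rw [h1, hshift]
    have hfl'fl : fl' = fl := by
      refine hfluniq fl' ⟨hflpt', ?_⟩
      rw [← hls'def, hls'vL]
    have hfr'fr : fr' = fr := by
      refine hfruniq fr' ⟨hfrpt', ?_⟩
      rw [← hxs'def, hxs'xs]
    rw [hI'I, hfl'fl, hfr'fr]
-- Section 10: forest-level existence and uniqueness
theorem partW_aux (n : ℕ)
    (IHW : ∀ m < n, ∀ w, IsPacked w → w.length = m →
      ∃! f, (∀ x ∈ f, IsPT x) ∧ ThetaF f = w)
    (hT : ∀ m ≤ n, ∀ u, IsPacked u → Indec u → u ≠ [] → u.length = m →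
      ∃! t, IsPT t ∧ ThetaT t = u) :
    ∀ w, IsPacked w → w.length = n → ∃! f, (∀ x ∈ f, IsPT x) ∧ ThetaF f = w := by
  classical
  intro w hpk hwlen
  rcases eq_or_ne w [] with rfl | hwne
  · refine ⟨[], ⟨by simp, ThetaF_nil⟩, ?_⟩
    rintro f' ⟨hpt', hTf'⟩
    cases f' with
    | nil => rfl
    | cons t ts =>
      exfalso
      have hlen := thetaF_length hpt'
      rw [hTf'] at hlen
      have h2 : 0 < forestWeight (t :: ts) := forestWeight_pos hpt' (by simp)
      simp only [List.length_nil] at hlen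
      omega
  · have hn1 : 1 ≤ n := by
      have := List.length_pos_iff.2 hwne
      omega
    set Q : ℕ → Prop := fun q => 0 < q ∧ (GD w q ∨ q = n) with hQ
    have hQn : Q n := by
      simp only [hQ]
      refine ⟨by omega, Or.inr ?_⟩
      trivial
    have hex : ∃ q, Q q := ⟨n, hQn⟩
    set q := Nat.find hex with hqdef
    have hq : Q q := Nat.find_spec hex
    have hqmin : ∀ j, j < q → ¬Q j := fun j hj => Nat.find_min hex hj
    have hqn : q ≤ n := Nat.find_min' hex hQn
    simp only [hQ] at hq
    obtain ⟨hq0, hqGD⟩ := hq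
    set R := w.drop q with hRdef
    set B := w.take q with hBdef
    have hBR : B ++ R = w := List.take_append_drop _ _
    have hBlen : B.length = q := by
      rw [hBdef, List.length_take, hwlen]
      omega
    have hRlen : R.length = n - q := by rw [hRdef, List.length_drop, hwlen]
    set c := wmax R with hcdef
    have hBu : ∀ a ∈ B, a ∈ w := fun a ha => List.take_subset _ _ ha
    have hRu : ∀ a ∈ R, a ∈ w := fun a ha => List.drop_subset _ _ ha
    have hBg : ∀ a ∈ B, c + 1 ≤ a := by
      rcases hqGD with hGD | hqn'
      · intro a ha
        rcases eq_or_ne R [] with h | h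
        · have hc0 : c = 0 := by rw [hcdef, h, wmax_nil]
          have := hpk.1 a (hBu a ha)
          omega
        · obtain ⟨_, _, hcomp⟩ := hGD
          have hcR : c ∈ w.drop q := by rw [← hRdef]; exact wmax_mem h
          have haB : a ∈ w.take q := by rw [← hBdef]; exact ha
          exact hcomp c hcR a haB
      · intro a ha
        have hR0 : R = [] := by
          refine List.length_eq_zero_iff.1 ?_
          omega
        have hc0 : c = 0 := by rw [hcdef, hR0, wmax_nil]
        have := hpk.1 a (hBu a ha)
        omega
    have hBne : B ≠ [] := by
      intro hc'
      have : B.length = 0 := by rw [hc']; rfl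
      omega
    have hcw : c ≤ wmax w := by
      rcases eq_or_ne R [] with h | h
      · rw [hcdef, h, wmax_nil]
        omega
      · exact le_wmax_of_mem (hRu _ (wmax_mem h))
    have hRpk : IsPacked R := by
      constructor
      · exact fun a ha => hpk.1 a (hRu a ha)
      · intro v hv0 hvc
        have hvw : v ∈ w := hpk.2 v hv0 (by omega)
        rw [← hBR] at hvw
        rcases List.mem_append.1 hvw with h | h
        · have := hBg v h
          omega
        · exact h
    set u := B.map (· - c) with hudef
    have hulen : u.length = q := by rw [hudef, List.length_map, hBlen]
    have hushift : shift c u = B :=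
      shift_unshift (fun a ha => by have := hBg a ha; omega)
    have hune : u ≠ [] := by
      intro hc'
      have : u.length = 0 := by rw [hc']; rfl
      omega
    have hwmaxB : wmax B = wmax w := by
      refine le_antisymm (wmax_le_iff.2 (fun a ha => le_wmax_of_mem (hBu a ha))) ?_
      have hmem : wmax w ∈ B ++ R := by rw [hBR]; exact wmax_mem hwne
      rcases List.mem_append.1 hmem with h | h
      · exact le_wmax_of_mem h
      · have h1 : wmax w ≤ c := by rw [hcdef]; exact le_wmax_of_mem h
        have h2 := hBg _ (wmax_mem hBne)
        have h3 := le_wmax_of_mem (hBu _ (wmax_mem hBne))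
        omega
    have hupk : IsPacked u := by
      constructor
      · intro x hx
        obtain ⟨a, ha, rfl⟩ := List.mem_map.1 hx
        have := hBg a ha
        omega
      · intro v hv0 hvle
        rw [hudef, wmax_map_sub hBne (fun a ha => by have := hBg a ha; omega), hwmaxB] at hvle
        have hvcw : v + c ∈ w := hpk.2 (v + c) (by omega) (by omega)
        rw [← hBR] at hvcw
        rcases List.mem_append.1 hvcw with h | h
        · exact List.mem_map.2 ⟨v + c, h, by omega⟩
        · have : v + c ≤ c := by rw [hcdef]; exact le_wmax_of_mem h
          omega
    have huind : Indec u := by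
      intro j hGDu
      obtain ⟨hj0, hjlen, hcomp⟩ := hGDu
      rw [hulen] at hjlen
      refine hqmin j hjlen ?_
      simp only [hQ]
      refine ⟨hj0, Or.inl ⟨hj0, by omega, ?_⟩⟩
      intro b hb a ha
      have haB : a ∈ B.take j := by
        rw [← hBR, List.take_append] at ha
        rcases List.mem_append.1 ha with h | h
        · exact h
        · have hz : j - B.length = 0 := by omega
          rw [hz] at h
          simp at h
      obtain ⟨a0, ha0, ha0e⟩ : ∃ a0 ∈ u.take j, a0 + c = a := by
        rw [← hushift] at haB
        unfold shift at haB
        rw [← List.map_take] at haB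
        obtain ⟨a0, h1, h2⟩ := List.mem_map.1 haB
        exact ⟨a0, h1, h2⟩
      rw [← hBR, List.drop_append] at hb
      rcases List.mem_append.1 hb with h | h
      · rw [← hushift] at h
        unfold shift at h
        rw [← List.map_drop] at h
        obtain ⟨b0, hb0, hb0e⟩ := List.mem_map.1 h
        have := hcomp b0 hb0 a0 ha0
        omega
      · have hbR : b ∈ R := List.drop_subset _ _ h
        have h1 : b ≤ c := by rw [hcdef]; exact le_wmax_of_mem hbR
        have h2 : 1 ≤ a0 := hupk.1 a0 (List.take_subset _ _ ha0)
        omega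
    obtain ⟨t, ⟨hpt, hTt⟩, htuniq⟩ := hT q hqn u hupk huind hune hulen
    obtain ⟨ts, ⟨htspt, hTts⟩, htsuniq⟩ := IHW (n - q) (by omega) R hRpk hRlen
    have hTf : ThetaF (t :: ts) = w := by
      rw [ThetaF_cons, hTts, hTt, ← hcdef, hushift]
      exact hBR
    have hfpt : ∀ x ∈ t :: ts, IsPT x := by
      intro x hx
      rcases List.mem_cons.1 hx with rfl | hx
      · exact hpt
      · exact htspt x hx
    refine ⟨t :: ts, ⟨hfpt, hTf⟩, ?_⟩
    rintro f' ⟨hpt', hTf'⟩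
    cases f' with
    | nil =>
      exfalso
      rw [ThetaF_nil] at hTf'
      exact hwne hTf'.symm
    | cons t' ts' =>
      have hpt'' := hpt' t' (by simp)
      have hts'pt : ∀ x ∈ ts', IsPT x := fun x hx => hpt' x (List.mem_cons_of_mem _ hx)
      have hq' : t'.weight + forestWeight ts' = n := by
        have h1 := thetaF_length hpt'
        rw [hTf', hwlen, forestWeight_cons] at h1
        omega
      have hQq' : Q t'.weight := by
        simp only [hQ]
        refine ⟨IsPT_weight_pos hpt'', ?_⟩
        rcases eq_or_ne ts' [] with rfl | hne'
        · right
          rw [forestWeight_nil] at hq'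
          omega
        · left
          have h1 := forest_GD_head (TF_of hpt') hne'
          rwa [hTf'] at h1
      have hnotbelow : ∀ j, j < t'.weight → ¬Q j := by
        intro j hj
        simp only [hQ]
        rintro ⟨hj0, hGDj | hjn⟩
        · obtain ⟨b, hb, a, ha, hab⟩ :=
            forest_head_wit (TF_of hpt') (by simp) j hj0 (by simpa using hj)
          rw [hTf'] at hb ha
          have := hGDj.2.2 b hb a ha
          omega
        · omega
      have hqq' : q = t'.weight := by
        have h1 : q ≤ t'.weight := Nat.find_min' hex hQq'
        rcases lt_or_eq_of_le h1 with h | h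
        · exact absurd (Nat.find_spec hex) (hnotbelow q h)
        · exact h
      have hTf'2 : shift (wmax (ThetaF ts')) (ThetaT t') ++ ThetaF ts' = w := by
        rw [← ThetaF_cons]
        exact hTf'
      have hAlen' : (shift (wmax (ThetaF ts')) (ThetaT t')).length = q := by
        rw [length_shift, thetaT_length hpt'', ← hqq']
      have hR' : ThetaF ts' = R := by
        have h1 : ThetaF ts' = (shift (wmax (ThetaF ts')) (ThetaT t') ++ ThetaF ts').drop q := by
          rw [← hAlen', List.drop_left]
        rw [hTf'2] at h1
        rw [h1, hRdef]
      have hcc : wmax (ThetaF ts') = c := by rw [hR', hcdef]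
      have hB' : shift c (ThetaT t') = B := by
        have h1 : shift (wmax (ThetaF ts')) (ThetaT t') =
            (shift (wmax (ThetaF ts')) (ThetaT t') ++ ThetaF ts').take q := by
          rw [← hAlen', List.take_left]
        rw [hTf'2] at h1
        rw [← hcc, h1, hBdef]
      have hu' : ThetaT t' = u := by
        refine shift_injective c ?_
        rw [hB', ← hushift]
      have ht'et : t' = t := htuniq t' ⟨hpt'', hu'⟩
      have hts'ets : ts' = ts := htsuniq ts' ⟨hts'pt, hR'⟩
      rw [ht'et, hts'ets]

theorem master : ∀ n : ℕ,
    ∀ w, IsPacked w → w.length = n → ∃! f, (∀ x ∈ f, IsPT x) ∧ ThetaF f = w := by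
  intro n
  induction n using Nat.strong_induction_on with
  | _ n IH =>
    refine partW_aux n IH ?_
    intro m hm u h1 h2 h3 h4
    refine partT_aux m ?_ u h1 h2 h3 h4
    intro m' hm' w hw1 hw2
    exact IH m' (by omega) w hw1 hw2
theorem card_packedWords_eq_card_packedForests (n : ℕ) :
    Nat.card {w : List ℕ // IsPacked w ∧ w.length = n} =
      Nat.card {f : List LTree // (∀ t ∈ f, IsPT t) ∧ forestWeight f = n} := by
  refine Nat.card_congr (Equiv.symm ?_)
  refine Equiv.ofBijective
    (fun f => ⟨ThetaF f.1, thetaF_packed f.2.1, by rw [thetaF_length f.2.1, f.2.2]⟩)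
    ⟨?_, ?_⟩
  · intro f1 f2 h
    have h1 : ThetaF f1.1 = ThetaF f2.1 := congrArg Subtype.val h
    obtain ⟨f, hf, huniq⟩ :=
      master (ThetaF f1.1).length (ThetaF f1.1) (thetaF_packed f1.2.1) rfl
    have e1 := huniq f1.1 ⟨f1.2.1, rfl⟩
    have e2 := huniq f2.1 ⟨f2.2.1, h1.symm⟩
    exact Subtype.ext (e1.trans e2.symm)
  · rintro ⟨w, hw, hlen⟩
    obtain ⟨f, ⟨hfp, hfw⟩, _⟩ := master n w hw hlen
    refine ⟨⟨f, hfp, ?_⟩, ?_⟩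
    · rw [← thetaF_length hfp, hfw, hlen]
    · exact Subtype.ext hfw
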